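/- arXiv:2212.07250 — 13 statements merged into one kernel-verified Lean document; each statement's English description precedes it below -/
import Mathlib

section
/- Let m be a monad on Type (with lawful monad structure) that is commutative, i.e. for all a : m α and b : m β, do {x ← a; y ← b; pure (x, y)} = do {y ← b; x ← a; pure (x, y)}, and affine, i.e. for all a : m α, do {_ ← a; pure ()} = pure (). Suppose iid : m ℝ → m (Stream' ℝ) satisfies the recursive equation iid p = do {x ← p; xs ← iid p; pure (Stream'.cons x xs)} for every p : m ℝ. Then for every p : m ℝ and every list l : List ℕ of pairwise distinct indices (l.Nodup), one has do {xs ← iid p; pure (l.map (fun i => xs.get i))} = l.mapM (fun _ => p); that is, reading off any finite family of distinct coordinates of iid p is the same program as making that many independent draws from p. -/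
section Aux

variable {m : Type → Type} [Monad m] [LawfulMonad m]

private lemma aux_swap
    (hcomm : ∀ {α β : Type} (a : m α) (b : m β),
      (do let x ← a; let y ← b; pure (x, y)) = (do let y ← b; let x ← a; pure (x, y)))
    {α β γ : Type} (a : m α) (b : m β) (k : α → β → m γ) :
    (a >>= fun x => b >>= fun y => k x y) = (b >>= fun y => a >>= fun x => k x y) := by
  have h1 : (a >>= fun x => b >>= fun y => k x y)
      = ((do let x ← a; let y ← b; pure (x, y)) >>= fun z => k z.1 z.2) := by
    simp [bind_assoc]
  have h2 : (b >>= fun y => a >>= fun x => k x y)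
      = ((do let y ← b; let x ← a; pure (x, y)) >>= fun z => k z.1 z.2) := by
    simp [bind_assoc]
  rw [h1, h2, hcomm a b]

private lemma aux_drop
    (haff : ∀ {α : Type} (a : m α), (do let _ ← a; pure ()) = (pure () : m Unit))
    {α β : Type} (a : m α) (b : m β) : (a >>= fun _ => b) = b := by
  have h : (a >>= fun _ => b) = ((do let _ ← a; pure ()) >>= fun _ => b) := by
    simp [bind_assoc]
  rw [h, haff]
  simp

private lemma mapM_const_congr (p : m ℝ) :
    ∀ (l₁ l₂ : List ℕ), l₁.length = l₂.length →
      l₁.mapM (fun _ => p) = l₂.mapM (fun _ => p)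
  | [], [], _ => rfl
  | a :: l₁, b :: l₂, h => by
    simp only [List.mapM_cons]
    rw [mapM_const_congr p l₁ l₂ (by simpa using h)]
  | [], _ :: _, h => by simp at h
  | _ :: _, [], h => by simp at h

private lemma mapM_const_shape (p : m ℝ) {γ : Type} :
    ∀ (l : List ℕ) (g h : List ℝ → m γ),
      (∀ z : List ℝ, z.length = l.length → g z = h z) →
      (l.mapM (fun _ => p) >>= g) = (l.mapM (fun _ => p) >>= h)
  | [], g, h, H => by
    simp only [List.mapM_nil, pure_bind]
    exact H [] rfl
  | a :: l, g, h, H => by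
    simp only [List.mapM_cons, bind_assoc, pure_bind]
    refine congrArg (p >>= ·) (funext fun x => ?_)
    exact mapM_const_shape p l (fun zs => g (x :: zs)) (fun zs => h (x :: zs))
      (fun z hz => H (x :: z) (by simp [hz]))

private lemma sum_map_pred :
    ∀ (l : List ℕ), (0 : ℕ) ∉ l → (l.map (· - 1)).sum + l.length = l.sum
  | [], _ => by simp
  | a :: l, h => by
    have ha : a ≠ 0 := fun h0 => h (h0 ▸ List.mem_cons_self (a := a) (l := l))
    have := sum_map_pred l (fun hm => h (List.mem_cons_of_mem a hm))
    simp only [List.map_cons, List.sum_cons, List.length_cons]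
    omega

end Aux

/-- Theorem 2.1 of the paper: in a commutative affine monad, reading off any finite
family of distinct coordinates of an `iid` stream is the same program as making that
many independent draws. -/
theorem iid_distinct_coords_eq_indep_draws
    (m : Type → Type) [Monad m] [LawfulMonad m]
    (hcomm : ∀ {α β : Type} (a : m α) (b : m β),
      (do let x ← a; let y ← b; pure (x, y)) = (do let y ← b; let x ← a; pure (x, y)))
    (haff : ∀ {α : Type} (a : m α),
      (do let _ ← a; pure ()) = (pure () : m Unit))
    (iid : m ℝ → m (Stream' ℝ))
    (hiid : ∀ p : m ℝ,
      iid p = do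
        let x ← p
        let xs ← iid p
        pure (Stream'.cons x xs))
    (p : m ℝ) (l : List ℕ) (hl : l.Nodup) :
    (do let xs ← iid p; pure (l.map fun i => xs.get i)) = l.mapM (fun _ => p) := by
  have key : ∀ n (l : List ℕ), l.Nodup → l.sum + l.length ≤ n →
      (do let xs ← iid p; pure (l.map fun i => xs.get i)) = l.mapM (fun _ => p) := by
    intro n
    induction n with
    | zero =>
      intro l _ hn
      have hlen : l = [] := by
        cases l with
        | nil => rfl
        | cons a t => simp [List.length_cons] at hn
      subst hlen
      simp only [List.map_nil, List.mapM_nil]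
      exact aux_drop haff _ _
    | succ n IH =>
      intro l hl hn
      by_cases h0 : (0 : ℕ) ∈ l
      · -- 0 occurs in l
        obtain ⟨l₁, l₂, rfl⟩ := List.append_of_mem h0
        have hm := List.nodup_middle.mp hl
        have h0c : (0 : ℕ) ∉ l₁ ++ l₂ := (List.nodup_cons.mp hm).1
        have hcnd : (l₁ ++ l₂).Nodup := (List.nodup_cons.mp hm).2
        set l₁' := l₁.map (· - 1) with hl₁'
        set l₂' := l₂.map (· - 1) with hl₂'
        have hc' : ((l₁ ++ l₂).map (· - 1)).Nodup := by
          refine List.Nodup.map_on ?_ hcnd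
          intro x hx y hy hxy
          have hx0 : x ≠ 0 := fun h => h0c (h ▸ hx)
          have hy0 : y ≠ 0 := fun h => h0c (h ▸ hy)
          omega
        have hmeas : ((l₁ ++ l₂).map (· - 1)).sum + ((l₁ ++ l₂).map (· - 1)).length ≤ n := by
          have hs := sum_map_pred (l₁ ++ l₂) h0c
          have h1 : (l₁ ++ (0 :: l₂)).sum = (l₁ ++ l₂).sum := by simp
          have h2 : (l₁ ++ (0 :: l₂)).length = (l₁ ++ l₂).length + 1 := by simp; omega
          simp only [List.length_map] at *
          omega
        have IHc := IH ((l₁ ++ l₂).map (· - 1)) hc' hmeas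
        set n₁ := l₁.length with hn₁
        -- rewrite the coordinate-reading map after one unfolding
        have hmap : ∀ (x : ℝ) (xs : Stream' ℝ),
            ((l₁ ++ 0 :: l₂).map fun i => (Stream'.cons x xs).get i)
              = (((l₁ ++ l₂).map (· - 1)).map fun i => xs.get i).take n₁
                ++ x :: ((((l₁ ++ l₂).map (· - 1)).map fun i => xs.get i).drop n₁) := by
          intro x xs
          have hA : l₁.map (fun i => (Stream'.cons x xs).get i)
              = (l₁.map (· - 1)).map (fun i => xs.get i) := by
            simp only [List.map_map]
            refine List.map_congr_left fun i hi => ?_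
            have hi0 : i ≠ 0 := fun h => h0c (h ▸ List.mem_append_left l₂ hi)
            obtain ⟨j, rfl⟩ : ∃ j, i = j + 1 := ⟨i - 1, by omega⟩
            simp [Stream'.get_succ_cons]
          have hB : l₂.map (fun i => (Stream'.cons x xs).get i)
              = (l₂.map (· - 1)).map (fun i => xs.get i) := by
            simp only [List.map_map]
            refine List.map_congr_left fun i hi => ?_
            have hi0 : i ≠ 0 := fun h => h0c (h ▸ List.mem_append_right l₁ hi)
            obtain ⟨j, rfl⟩ : ∃ j, i = j + 1 := ⟨i - 1, by omega⟩
            simp [Stream'.get_succ_cons]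
          have hlenA : ((l₁.map (· - 1)).map fun i => xs.get i).length = n₁ := by simp [hn₁]
          have htake : (((l₁ ++ l₂).map (· - 1)).map fun i => xs.get i).take n₁
              = (l₁.map (· - 1)).map fun i => xs.get i := by
            simp only [List.map_append]
            exact List.take_left' hlenA
          have hdrop : (((l₁ ++ l₂).map (· - 1)).map fun i => xs.get i).drop n₁
              = (l₂.map (· - 1)).map fun i => xs.get i := by
            simp only [List.map_append]
            exact List.drop_left' hlenA
          rw [htake, hdrop]
          simp only [List.map_append, List.map_cons, Stream'.get_zero_cons]
          rw [hA, hB]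
        conv_lhs => rw [hiid p]
        simp only [bind_assoc, pure_bind]
        simp only [hmap]
        -- pull the inner program out
        have hstep : ∀ x : ℝ,
            (iid p >>= fun xs =>
              pure ((((l₁ ++ l₂).map (· - 1)).map fun i => xs.get i).take n₁
                ++ x :: ((((l₁ ++ l₂).map (· - 1)).map fun i => xs.get i).drop n₁)))
            = ((iid p >>= fun xs => pure (((l₁ ++ l₂).map (· - 1)).map fun i => xs.get i))
                >>= fun z => pure (z.take n₁ ++ x :: z.drop n₁)) := by
          intro x
          simp [bind_assoc]
        simp only [hstep, IHc]
        -- now compute the right-hand side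
        have hRHS : (l₁ ++ 0 :: l₂).mapM (fun _ => p)
            = (p >>= fun x => l₁.mapM (fun _ => p) >>= fun z₁ =>
                l₂.mapM (fun _ => p) >>= fun z₂ => pure (z₁ ++ x :: z₂)) := by
          rw [← aux_swap hcomm (l₁.mapM (fun _ => p)) p
            (fun z₁ x => l₂.mapM (fun _ => p) >>= fun z₂ => pure (z₁ ++ x :: z₂))]
          rw [List.mapM_append, List.mapM_cons]
          simp only [map_eq_pure_bind, bind_assoc, pure_bind]
        rw [hRHS]
        refine congrArg (p >>= ·) (funext fun x => ?_)
        have hsplit : ((l₁ ++ l₂).map (· - 1)).mapM (fun _ => p)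
            = (l₁.map (· - 1)).mapM (fun _ => p) >>= fun z₁ =>
                (l₂.map (· - 1)).mapM (fun _ => p) >>= fun z₂ => pure (z₁ ++ z₂) := by
          rw [List.map_append, List.mapM_append]
        rw [hsplit]
        rw [mapM_const_congr p (l₁.map (· - 1)) l₁ (by simp),
            mapM_const_congr p (l₂.map (· - 1)) l₂ (by simp)]
        simp only [bind_assoc, pure_bind]
        refine mapM_const_shape p l₁ _ _ (fun z₁ hz₁ => ?_)
        refine congrArg (l₂.mapM (fun _ => p) >>= ·) (funext fun z₂ => ?_)
        rw [List.take_left' hz₁, List.drop_left' hz₁]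
      · -- 0 does not occur in l
        have hl' : (l.map (· - 1)).Nodup := by
          refine List.Nodup.map_on ?_ hl
          intro x hx y hy hxy
          have hx0 : x ≠ 0 := fun h => h0 (h ▸ hx)
          have hy0 : y ≠ 0 := fun h => h0 (h ▸ hy)
          omega
        have hmap : ∀ (x : ℝ) (xs : Stream' ℝ),
            (l.map fun i => (Stream'.cons x xs).get i)
              = (l.map (· - 1)).map fun i => xs.get i := by
          intro x xs
          simp only [List.map_map]
          refine List.map_congr_left fun i hi => ?_
          have hi0 : i ≠ 0 := fun h => h0 (h ▸ hi)
          obtain ⟨j, rfl⟩ : ∃ j, i = j + 1 := ⟨i - 1, by omega⟩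
          simp [Stream'.get_succ_cons]
        conv_lhs => rw [hiid p]
        simp only [bind_assoc, pure_bind]
        simp only [hmap]
        rw [aux_drop haff p _]
        have hmeas : (l.map (· - 1)).sum + (l.map (· - 1)).length ≤ n := by
          have hs := sum_map_pred l h0
          rcases l with _ | ⟨a, t⟩
          · simp
          · simp only [List.length_map, List.length_cons, List.sum_cons,
              List.map_cons] at hs hn ⊢
            omega
        rw [IH (l.map (· - 1)) hl' hmeas]
        exact mapM_const_congr p (l.map (· - 1)) l (by simp)
  exact key (l.sum + l.length) l hl le_rfl
end

section
/- Let C be a category with a terminal object ⊤ and let T be a monad on C. Then ⊤ is a terminal object of the Kleisli category of T if and only if T.obj ⊤ is isomorphic to ⊤ (i.e., the monad T is affine). -/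
open CategoryTheory CategoryTheory.Limits

/-- Repackage a `C`-morphism into `T ⊤` as a Kleisli morphism. -/
def kleisliHomMk {C : Type*} [Category C] (T : Monad C) {X Y : C}
    (f : X ⟶ T.obj Y) : (Kleisli.mk T X) ⟶ (Kleisli.mk T Y) := ⟨f⟩

/-- Repackage a Kleisli morphism as a `C`-morphism into `T ⊤`. -/
def kleisliHomOut {C : Type*} [Category C] (T : Monad C) {X Y : C}
    (f : (Kleisli.mk T X) ⟶ (Kleisli.mk T Y)) : X ⟶ T.obj Y := f.of

/-- Part (3) of Lemma 5.1 of the paper: for a monad `T` on a category with a terminal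
object, the terminal object is terminal in the Kleisli category of `T` if and only if
`T ⊤ ≅ ⊤`, i.e. the monad `T` is affine. -/
theorem kleisli_terminal_iff_affine
    {C : Type*} [Category C] [HasTerminal C] (T : Monad C) :
    Nonempty (IsTerminal (Kleisli.mk T (⊤_ C))) ↔ Nonempty (T.obj (⊤_ C) ≅ ⊤_ C) := by
  constructor
  · rintro ⟨h⟩
    have ht : IsTerminal (T.obj (⊤_ C)) := by
      refine IsTerminal.ofUniqueHom
        (fun X => kleisliHomOut T (h.from (Kleisli.mk T X))) ?_
      intro X m
      exact congrArg (kleisliHomOut T) (h.hom_ext (kleisliHomMk T m) _)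
    exact ⟨ht.uniqueUpToIso terminalIsTerminal⟩
  · rintro ⟨e⟩
    refine ⟨IsTerminal.ofUniqueHom
      (fun X => kleisliHomMk T ((@terminal.from C _ _ X.of) ≫ e.inv)) ?_⟩
    intro X m
    apply Kleisli.hom_ext; show kleisliHomOut T m = kleisliHomOut T (kleisliHomMk T ((@terminal.from C _ _ X.of) ≫ e.inv))
    unfold kleisliHomMk kleisliHomOut
    rw [← cancel_mono e.hom]
    exact terminal.hom_ext _ _
end

section
/- Let Ω = List ℕ → ℝ with the product σ-algebra, let U = volume.restrict (Set.Icc (0:ℝ) 1) be the uniform probability measure on ℝ, and let μ = Measure.infinitePi (fun _ : List ℕ => U) be the infinite product probability measure on Ω. Define γ : Ω → Ω × Ω by γ ω = (fun l => ω (0 :: l), fun l => ω (match l with | [] => [] | i :: t => (i+1) :: t)). Then γ is a measurable bijection and is measure-preserving from (Ω, μ) to (Ω × Ω, μ.prod μ): Measure.map γ μ = μ.prod μ. -/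
open MeasureTheory

/-- The reindexing bijection underlying the splitting map: a path either starts with `0`
(leftmost subtree) or is a path in the remaining tree. -/
def treeSumEquiv : (List ℕ ⊕ List ℕ) ≃ List ℕ where
  toFun s := match s with
    | .inl t => 0 :: t
    | .inr [] => []
    | .inr (i :: t) => (i + 1) :: t
  invFun l := match l with
    | [] => .inr []
    | 0 :: t => .inl t
    | (i + 1) :: t => .inr (i :: t)
  left_inv s := by rcases s with t | (_ | ⟨i, t⟩) <;> rfl
  right_inv l := by rcases l with _ | ⟨(_ | i), t⟩ <;> rfl

/-- Transporting a projective limit of i.i.d. products along a reindexing bijection. -/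
lemma isProjectiveLimit_map_precomp {ι κ α : Type*} [MeasurableSpace α]
    (U : Measure α) [SigmaFinite U] (e : κ ≃ ι) (ν : Measure (ι → α))
    (hν : IsProjectiveLimit ν (fun I : Finset ι => Measure.pi fun _ : I => U)) :
    IsProjectiveLimit (ν.map (fun ω k => ω (e k)))
      (fun J : Finset κ => Measure.pi fun _ : J => U) := by
  classical
  intro J
  set I : Finset ι := J.image e with hI
  let ψ : {x // x ∈ J} ≃ {x // x ∈ I} :=
    { toFun := fun j => ⟨e j.1, Finset.mem_image_of_mem e j.2⟩
      invFun := fun i => ⟨e.symm i.1, by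
        obtain ⟨j, hj, hji⟩ := Finset.mem_image.mp i.2
        rw [← hji, Equiv.symm_apply_apply]; exact hj⟩
      left_inv := fun j => Subtype.ext (e.symm_apply_apply j.1)
      right_inv := fun i => Subtype.ext (e.apply_symm_apply i.1) }
  have hR : Measurable (fun ω : ι → α => fun k => ω (e k)) :=
    measurable_pi_lambda _ fun k => measurable_pi_apply _
  rw [Measure.map_map (J.measurable_restrict) hR]
  have hfun : (J.restrict ∘ fun ω : ι → α => fun k => ω (e k)) =
      ⇑(MeasurableEquiv.piCongrLeft (fun _ : I => α) ψ).symm ∘ I.restrict := by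
    funext ω
    ext j
    exact (Equiv.piCongrLeft_symm_apply (P := fun _ : I => α) (e := ψ) (I.restrict ω) j).symm
  rw [hfun, ← Measure.map_map
    ((MeasurableEquiv.piCongrLeft (fun _ : I => α) ψ).symm.measurable) (I.measurable_restrict),
    hν I]
  exact (MeasurePreserving.symm (MeasurableEquiv.piCongrLeft (fun _ : I => α) ψ)
    (measurePreserving_piCongrLeft (fun _ : I => U) ψ)).map_eq

/-- A product of two copies of a projective limit of i.i.d. products is itself (after
gluing via `sumPiEquivProdPi`) the projective limit of the i.i.d. products over the sum type. -/
lemma isProjectiveLimit_prod_glue {ι α : Type*} [MeasurableSpace α]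
    (U : Measure α) [SigmaFinite U] (ν : Measure (ι → α)) [SigmaFinite ν]
    (hν : IsProjectiveLimit ν (fun I : Finset ι => Measure.pi fun _ : I => U)) :
    IsProjectiveLimit
      ((ν.prod ν).map (MeasurableEquiv.sumPiEquivProdPi (fun _ : ι ⊕ ι => α)).symm)
      (fun J : Finset (ι ⊕ ι) => Measure.pi fun _ : J => U) := by
  classical
  intro J
  set Jl : Finset ι := J.preimage Sum.inl Sum.inl_injective.injOn with hJl
  set Jr : Finset ι := J.preimage Sum.inr Sum.inr_injective.injOn with hJr
  let q : ({x // x ∈ Jl} ⊕ {x // x ∈ Jr}) ≃ {x // x ∈ J} :=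
    { toFun := fun s => match s with
        | .inl ⟨i, h⟩ => ⟨.inl i, Finset.mem_preimage.mp h⟩
        | .inr ⟨i, h⟩ => ⟨.inr i, Finset.mem_preimage.mp h⟩
      invFun := fun j => match j with
        | ⟨.inl i, h⟩ => .inl ⟨i, Finset.mem_preimage.mpr h⟩
        | ⟨.inr i, h⟩ => .inr ⟨i, Finset.mem_preimage.mpr h⟩
      left_inv := fun s => by rcases s with ⟨i, h⟩ | ⟨i, h⟩ <;> rfl
      right_inv := fun j => by rcases j with ⟨i | i, h⟩ <;> rfl }
  have hl : MeasurePreserving Jl.restrict ν (Measure.pi fun _ : Jl => U) :=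
    ⟨Jl.measurable_restrict, hν Jl⟩
  have hr : MeasurePreserving Jr.restrict ν (Measure.pi fun _ : Jr => U) :=
    ⟨Jr.measurable_restrict, hν Jr⟩
  have mp : MeasurePreserving
      (⇑(MeasurableEquiv.piCongrLeft (fun _ : J => α) q) ∘
        ⇑(MeasurableEquiv.sumPiEquivProdPi (fun _ : ({x // x ∈ Jl} ⊕ {x // x ∈ Jr}) => α)).symm ∘
        Prod.map Jl.restrict Jr.restrict)
      (ν.prod ν) (Measure.pi fun _ : J => U) :=
    (measurePreserving_piCongrLeft (fun _ : J => U) q).comp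
      ((measurePreserving_sumPiEquivProdPi_symm
        (fun _ : ({x // x ∈ Jl} ⊕ {x // x ∈ Jr}) => U)).comp (hl.prod hr))
  rw [Measure.map_map (J.measurable_restrict) (MeasurableEquiv.measurable _)]
  have hfun : (J.restrict ∘ ⇑(MeasurableEquiv.sumPiEquivProdPi (fun _ : ι ⊕ ι => α)).symm) =
      ⇑(MeasurableEquiv.piCongrLeft (fun _ : J => α) q) ∘
        ⇑(MeasurableEquiv.sumPiEquivProdPi (fun _ : ({x // x ∈ Jl} ⊕ {x // x ∈ Jr}) => α)).symm ∘
        Prod.map Jl.restrict Jr.restrict := by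
    funext p
    ext j
    rcases p with ⟨a, b⟩
    rcases j with ⟨i | i, h⟩
    · have : (⟨Sum.inl i, h⟩ : {x // x ∈ J}) = q (.inl ⟨i, Finset.mem_preimage.mpr h⟩) := rfl
      simp only [Function.comp_apply, this, MeasurableEquiv.coe_sumPiEquivProdPi_symm]
      rw [show ⇑(MeasurableEquiv.piCongrLeft (fun _ : J => α) q) =
          ⇑(Equiv.piCongrLeft (fun _ : J => α) q) from rfl]
      rw [Equiv.piCongrLeft_apply_apply]
      rfl
    · have : (⟨Sum.inr i, h⟩ : {x // x ∈ J}) = q (.inr ⟨i, Finset.mem_preimage.mpr h⟩) := rfl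
      simp only [Function.comp_apply, this, MeasurableEquiv.coe_sumPiEquivProdPi_symm]
      rw [show ⇑(MeasurableEquiv.piCongrLeft (fun _ : J => α) q) =
          ⇑(Equiv.piCongrLeft (fun _ : J => α) q) from rfl]
      rw [Equiv.piCongrLeft_apply_apply]
      rfl
  rw [hfun]
  exact mp.map_eq

/-- Section 5.3.1 of the paper: the splitting map `γ` on the space of rose trees
`Ω = List ℕ → ℝ`, equipped with the countable product `μ` of uniform measures on `[0,1]`,
is a measurable bijection that is measure-preserving from `(Ω, μ)` to `(Ω × Ω, μ ⊗ μ)`.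
Here `μ` is characterized as the projective (Kolmogorov) limit of the finite products of
the uniform measure, i.e. as the infinite product measure. -/
theorem splitTree_measurable_bijective_measurePreserving
    (U : Measure ℝ) (hU : U = volume.restrict (Set.Icc (0:ℝ) 1))
    (μ : Measure (List ℕ → ℝ)) [IsProbabilityMeasure μ]
    (hμ : IsProjectiveLimit μ (fun J : Finset (List ℕ) => Measure.pi fun _ : J => U))
    (γ : (List ℕ → ℝ) → (List ℕ → ℝ) × (List ℕ → ℝ))
    (hγ : γ = fun ω => (fun l => ω (0 :: l),
        fun l => ω (match l with | [] => [] | i :: t => (i + 1) :: t))) :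
    Measurable γ ∧ Function.Bijective γ ∧ Measure.map γ μ = μ.prod μ := by
  have hUfin : IsProbabilityMeasure U := by
    constructor
    rw [hU, Measure.restrict_apply_univ, Real.volume_Icc]
    norm_num
  -- the measurable equivalence realizing γ
  set T := MeasurableEquiv.sumPiEquivProdPi (fun _ : List ℕ ⊕ List ℕ => ℝ) with hT
  set Epi := MeasurableEquiv.piCongrLeft (fun _ : List ℕ => ℝ) treeSumEquiv with hEpi
  set E := Epi.symm.trans T with hE
  have hγE : γ = ⇑E := by
    funext ω
    rw [hγ]
    have hsymm : ∀ s, Epi.symm ω s = ω (treeSumEquiv s) := fun s =>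
      Equiv.piCongrLeft_symm_apply (P := fun _ : List ℕ => ℝ) (e := treeSumEquiv) ω s
    have : E ω = T (Epi.symm ω) := rfl
    rw [this]
    have hTapp : T (Epi.symm ω) =
        (fun i => Epi.symm ω (Sum.inl i), fun i => Epi.symm ω (Sum.inr i)) := rfl
    rw [hTapp]
    refine Prod.ext ?_ ?_
    · funext l; exact (hsymm (Sum.inl l)).symm
    · funext l
      have := hsymm (Sum.inr l)
      simp only [this]
      rcases l with _ | ⟨i, t⟩ <;> rfl
  refine ⟨hγE ▸ E.measurable, hγE ▸ E.toEquiv.bijective, ?_⟩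
  -- measure preservation
  have hRfun : ⇑Epi.symm = (fun ω : List ℕ → ℝ => fun s => ω (treeSumEquiv s)) := by
    funext ω; ext s
    exact Equiv.piCongrLeft_symm_apply (P := fun _ : List ℕ => ℝ) (e := treeSumEquiv) ω s
  have h1 : IsProjectiveLimit (μ.map ⇑Epi.symm)
      (fun J : Finset (List ℕ ⊕ List ℕ) => Measure.pi fun _ : J => U) := by
    rw [hRfun]
    exact isProjectiveLimit_map_precomp U treeSumEquiv μ hμ
  have h2 : IsProjectiveLimit ((μ.prod μ).map ⇑T.symm)
      (fun J : Finset (List ℕ ⊕ List ℕ) => Measure.pi fun _ : J => U) :=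
    isProjectiveLimit_prod_glue U μ hμ
  have hEq : μ.map ⇑Epi.symm = (μ.prod μ).map ⇑T.symm := h1.unique h2
  have : μ.map γ = (μ.map ⇑Epi.symm).map ⇑T := by
    rw [Measure.map_map T.measurable Epi.symm.measurable, hγE]
    rfl
  rw [this, hEq, Measure.map_map T.measurable T.symm.measurable]
  simp
end

section
/- Fix p : ℝ with 0 ≤ p ≤ 1. Let U = volume.restrict (Set.Icc (0:ℝ) 1) be the uniform probability measure on ℝ and let ν_p = ENNReal.ofReal p • (U.prod U) + ENNReal.ofReal (1 - p) • (Measure.map (fun x => (x, x)) U) be the probability measure on ℝ × ℝ (resample the coordinate with probability p, keep it with probability 1 − p). Let m be the measure on Ω × Ω, where Ω = List ℕ → ℝ with the product σ-algebra, obtained as the pushforward of the infinite product measure Measure.infinitePi (fun _ : List ℕ => ν_p) on List ℕ → ℝ × ℝ under the map g ↦ (fun l => (g l).1, fun l => (g l).2). Then m is invariant under the swap map: Measure.map Prod.swap m = m. -/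
open MeasureTheory

/-- Reversibility of the `mutateTree p` proposal kernel (Section 4.2 of the paper):
the joint law `m` of `(ω, ω')`, where `ω` is an infinite product of uniforms on the rose
tree `List ℕ → ℝ` and `ω'` independently resamples each node with probability `p`, is
invariant under swapping the two components. The infinite product measure is
characterized as the projective (Kolmogorov) limit of its finite-dimensional products. -/
theorem mutateTree_joint_swap_invariant
    (p : ℝ) (hp0 : 0 ≤ p) (hp1 : p ≤ 1)
    (U : Measure ℝ) (hU : U = volume.restrict (Set.Icc (0:ℝ) 1))
    (ν : Measure (ℝ × ℝ))
    (hν : ν = ENNReal.ofReal p • (U.prod U)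
        + ENNReal.ofReal (1 - p) • (Measure.map (fun x => (x, x)) U))
    (π : Measure (List ℕ → ℝ × ℝ)) [IsProbabilityMeasure π]
    (hπ : IsProjectiveLimit π (fun J : Finset (List ℕ) => Measure.pi fun _ : J => ν))
    (m : Measure ((List ℕ → ℝ) × (List ℕ → ℝ)))
    (hm : m = Measure.map (fun g => (fun l => (g l).1, fun l => (g l).2)) π) :
    Measure.map Prod.swap m = m := by
  -- U is a finite measure
  have hUfin : IsFiniteMeasure U := by
    rw [hU]
    refine ⟨?_⟩
    simp [Real.volume_Icc]
  have hUsf : SigmaFinite U := hUfin.toSigmaFinite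
  -- ν is swap invariant
  have hdiag : Measurable (fun x : ℝ => (x, x)) := measurable_id.prodMk measurable_id
  have hνswap : Measure.map Prod.swap ν = ν := by
    rw [hν, Measure.map_add _ _ measurable_swap, Measure.map_smul, Measure.map_smul,
      Measure.prod_swap, Measure.map_map measurable_swap hdiag]
    rfl
  have hνfin : IsFiniteMeasure ν := by
    rw [hν]
    constructor
    simp only [Measure.coe_add, Measure.coe_smul, Pi.add_apply, Pi.smul_apply, smul_eq_mul]
    have h1 : (U.prod U) Set.univ < ⊤ := measure_lt_top _ _
    have h2 : (Measure.map (fun x => (x, x)) U) Set.univ < ⊤ := by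
      rw [Measure.map_apply hdiag MeasurableSet.univ]
      exact measure_lt_top _ _
    exact ENNReal.add_lt_top.2 ⟨ENNReal.mul_lt_top ENNReal.ofReal_lt_top h1,
      ENNReal.mul_lt_top ENNReal.ofReal_lt_top h2⟩
  -- the pointwise swap map on functions
  set S : (List ℕ → ℝ × ℝ) → (List ℕ → ℝ × ℝ) := fun g l => Prod.swap (g l) with hS
  have hSmeas : Measurable S :=
    measurable_pi_lambda _ fun l => measurable_swap.comp (measurable_pi_apply l)
  -- finite-dimensional swap invariance
  have hpiswap : ∀ J : Finset (List ℕ),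
      Measure.map (fun (g : J → ℝ × ℝ) (j : J) => Prod.swap (g j))
        (Measure.pi fun _ : J => ν) = Measure.pi fun _ : J => ν := by
    intro J
    have hFmeas : Measurable (fun (g : J → ℝ × ℝ) (j : J) => Prod.swap (g j)) :=
      measurable_pi_lambda _ fun j => measurable_swap.comp (measurable_pi_apply j)
    refine (Measure.pi_eq fun s hs => ?_).symm
    rw [Measure.map_apply hFmeas (MeasurableSet.univ_pi hs)]
    have hpre : (fun (g : J → ℝ × ℝ) (j : J) => Prod.swap (g j)) ⁻¹' Set.pi Set.univ s
        = Set.pi Set.univ fun j => Prod.swap ⁻¹' s j := by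
      ext g
      simp [Set.mem_pi]
    rw [hpre, Measure.pi_pi]
    congr 1
    ext j
    rw [← Measure.map_apply measurable_swap (hs j), hνswap]
  -- map S π is also a projective limit, hence equals π
  have hπS : IsProjectiveLimit (π.map S) (fun J : Finset (List ℕ) => Measure.pi fun _ : J => ν) := by
    intro J
    have hres : Measurable (J.restrict (π := fun _ : List ℕ => ℝ × ℝ)) :=
      measurable_pi_lambda _ fun j => measurable_pi_apply _
    rw [Measure.map_map hres hSmeas]
    have hcomp : (J.restrict (π := fun _ : List ℕ => ℝ × ℝ)) ∘ S
        = (fun (g : J → ℝ × ℝ) (j : J) => Prod.swap (g j)) ∘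
          (J.restrict (π := fun _ : List ℕ => ℝ × ℝ)) := rfl
    have hF2 : Measurable (fun (g : J → ℝ × ℝ) (j : J) => Prod.swap (g j)) :=
      measurable_pi_lambda _ fun j => measurable_swap.comp (measurable_pi_apply j)
    rw [hcomp, ← Measure.map_map hF2 hres, hπ J, hpiswap J]
  have hmapS : π.map S = π := hπS.unique hπ
  -- conclude
  set f : (List ℕ → ℝ × ℝ) → (List ℕ → ℝ) × (List ℕ → ℝ) :=
    fun g => (fun l => (g l).1, fun l => (g l).2) with hf
  have hfmeas : Measurable f :=
    (measurable_pi_lambda _ fun l => (measurable_pi_apply l).fst).prodMk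
      (measurable_pi_lambda _ fun l => (measurable_pi_apply l).snd)
  have hcomp2 : Prod.swap ∘ f = f ∘ S := rfl
  rw [hm, Measure.map_map measurable_swap hfmeas, hcomp2,
    ← Measure.map_map hfmeas hSmeas, hmapS]
end

section
/- Let Ω be a measurable space and let m be a measure on Ω × Ω that is invariant under the swap map: Measure.map Prod.swap m = m. Let ℓ : Ω → ℝ≥0∞ be measurable with ℓ ω ≠ 0 and ℓ ω ≠ ∞ for every ω. Then for every measurable f : Ω × Ω → ℝ≥0∞, ∫⁻ q, f q * (ℓ q.2 / ℓ q.1) * ℓ q.1 ∂m = ∫⁻ q, f q.swap * ℓ q.1 ∂m. In other words, a proposal kernel whose joint measure with the base probability measure is swap-invariant is Green with ratio r(ω₁, ω₂) = ℓ(ω₂) / ℓ(ω₁). -/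
open MeasureTheory ENNReal

/-- Theorem 4.1 of the paper: if the joint measure `m` of the base measure and a proposal
kernel is swap-invariant (the kernel is reversible), then the kernel is Green with ratio
`r(ω₁, ω₂) = ℓ(ω₂) / ℓ(ω₁)`. -/
theorem green_of_swap_invariant
    {Ω : Type*} [MeasurableSpace Ω]
    (m : Measure (Ω × Ω)) (hm : Measure.map Prod.swap m = m)
    (ℓ : Ω → ℝ≥0∞) (hℓ : Measurable ℓ)
    (hℓ0 : ∀ ω, ℓ ω ≠ 0) (hℓtop : ∀ ω, ℓ ω ≠ ∞)
    (f : Ω × Ω → ℝ≥0∞) (hf : Measurable f) :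
    ∫⁻ q, f q * (ℓ q.2 / ℓ q.1) * ℓ q.1 ∂m = ∫⁻ q, f q.swap * ℓ q.1 ∂m := by
  have h1 : ∀ q : Ω × Ω, f q * (ℓ q.2 / ℓ q.1) * ℓ q.1 = f q * ℓ q.2 := by
    intro q
    rw [mul_assoc, ENNReal.div_mul_cancel (hℓ0 _) (hℓtop _)]
  simp only [h1]
  conv_rhs => rw [← hm]
  rw [lintegral_map (by exact (hf.comp measurable_swap).mul (hℓ.comp measurable_fst))
    measurable_swap]
  simp
end

section
/- Let Ω be a measurable space, μ a probability measure on Ω, ℓ : Ω → ℝ≥0∞ measurable with ∫⁻ ω, ℓ ω ∂μ < ∞, k a Markov kernel on Ω, and r : Ω × Ω → ℝ≥0∞ measurable, such that k is Green with respect to (μ, ℓ) with ratio r. Let B = (μ.withDensity ℓ) ⊗ₘ k be the joint measure on Ω × Ω of the unnormalized measure and the proposal kernel. Then for B-almost every pair q = (ω, ω'), one has r (ω, ω') * r (ω', ω) = 1. -/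
open MeasureTheory ProbabilityTheory ENNReal

/-- The Green ratio is almost everywhere multiplicatively inverse to its swap (Section 5.3
of the paper): if `k` is Green with respect to `(μ, ℓ)` with ratio `r`, then for
`(μ.withDensity ℓ) ⊗ₘ k`-almost every pair `(ω, ω')`, `r (ω, ω') * r (ω', ω) = 1`. -/
theorem green_ratio_mul_swap_ae_eq_one
    {Ω : Type*} [MeasurableSpace Ω]
    (μ : Measure Ω) [IsProbabilityMeasure μ]
    (ℓ : Ω → ℝ≥0∞) (hℓ : Measurable ℓ) (hℓint : ∫⁻ ω, ℓ ω ∂μ < ∞)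
    (k : Kernel Ω Ω) [IsMarkovKernel k]
    (r : Ω × Ω → ℝ≥0∞) (hr : Measurable r)
    (hGreen : ∀ f : Ω × Ω → ℝ≥0∞, Measurable f →
      ∫⁻ ω, (∫⁻ ω', f (ω, ω') * r (ω, ω') ∂(k ω)) * ℓ ω ∂μ
        = ∫⁻ ω, (∫⁻ ω', f (ω', ω) ∂(k ω)) * ℓ ω ∂μ) :
    ∀ᵐ q ∂((μ.withDensity ℓ) ⊗ₘ k), r (q.1, q.2) * r (q.2, q.1) = 1 := by
  have hfin : IsFiniteMeasure (μ.withDensity ℓ) := isFiniteMeasure_withDensity hℓint.ne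
  set B : Measure (Ω × Ω) := (μ.withDensity ℓ) ⊗ₘ k with hB
  have hBfin : IsFiniteMeasure B := by rw [hB]; infer_instance
  have hBsf : SigmaFinite B := hBfin.toSigmaFinite
  -- key identity in terms of B
  have key : ∀ f : Ω × Ω → ℝ≥0∞, Measurable f →
      ∫⁻ q, f q * r q ∂B = ∫⁻ q, f q.swap ∂B := by
    intro f hf
    have hR : ∫⁻ q : Ω × Ω, f q.swap ∂((μ.withDensity ℓ) ⊗ₘ k)
        = ∫⁻ a, ∫⁻ b, f (b, a) ∂k a ∂(μ.withDensity ℓ) :=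
      Measure.lintegral_compProd (hf.comp measurable_swap)
    have hm1 : Measurable (Function.uncurry fun a b : Ω => f (a, b) * r (a, b)) := by
      exact hf.mul hr
    have hm2 : Measurable (Function.uncurry fun a b : Ω => f (b, a)) := by
      exact hf.comp measurable_swap
    rw [hB, Measure.lintegral_compProd (f := fun q => f q * r q) (hf.mul hr), hR,
      lintegral_withDensity_eq_lintegral_mul _ hℓ
        (Measurable.lintegral_kernel_prod_right hm1),
      lintegral_withDensity_eq_lintegral_mul _ hℓ
        (Measurable.lintegral_kernel_prod_right hm2)]
    simp only [Pi.mul_apply, mul_comm (ℓ _)]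
    exact hGreen f hf
  -- B.withDensity r = B.map Prod.swap
  have hswap : B.withDensity r = B.map Prod.swap := by
    ext s hs
    rw [withDensity_apply _ hs, Measure.map_apply measurable_swap hs]
    have h1 := key (s.indicator 1) (measurable_one.indicator hs)
    have h2 : (fun q => s.indicator (1 : Ω × Ω → ℝ≥0∞) q * r q) = s.indicator r := by
      funext q
      by_cases hq : q ∈ s <;> simp [Set.indicator_apply, hq]
    rw [h2] at h1
    have h3 : (fun q : Ω × Ω => s.indicator (1 : Ω × Ω → ℝ≥0∞) q.swap)
        = (Prod.swap ⁻¹' s).indicator (1 : Ω × Ω → ℝ≥0∞) := by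
      funext q
      by_cases hq : q.swap ∈ s <;> simp [Set.indicator_apply, hq, Set.mem_preimage]
    rw [h3, lintegral_indicator_one (measurable_swap hs), lintegral_indicator hs] at h1
    exact h1
  -- the product density gives back B
  have hmul : B.withDensity (fun q => r q * r q.swap) = B := by
    have h1 : (fun q : Ω × Ω => r q * r q.swap) = r * (r ∘ Prod.swap) := rfl
    rw [h1, withDensity_mul _ hr (hr.comp measurable_swap), hswap]
    ext s hs
    rw [withDensity_apply _ hs, setLIntegral_map hs (hr.comp measurable_swap) measurable_swap]
    simp only [Function.comp_apply, Prod.swap_swap]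
    rw [← withDensity_apply _ (measurable_swap hs), hswap,
      Measure.map_apply measurable_swap (measurable_swap hs),
      ← Set.preimage_comp, Prod.swap_swap_eq, Set.preimage_id]
  have hone : B.withDensity (fun q => r q * r q.swap) = B.withDensity 1 := by
    rw [hmul, withDensity_one]
  have := (withDensity_eq_iff_of_sigmaFinite
    ((hr.mul (hr.comp measurable_swap)).aemeasurable) aemeasurable_const).mp hone
  filter_upwards [this] with q hq
  exact hq
end

section
/- Let Ω be a measurable space, μ a probability measure on Ω, ℓ : Ω → ℝ≥0∞ measurable with ∫⁻ ω, ℓ ω ∂μ < ∞, k a Markov kernel on Ω, and r : Ω × Ω → ℝ≥0∞ measurable, such that k is Green with respect to (μ, ℓ) with ratio r. Then the accepted-move part of the Metropolis–Hastings–Green dynamics is in detailed balance: for every measurable f : Ω × Ω → ℝ≥0∞, ∫⁻ ω, (∫⁻ ω', f (ω, ω') * min 1 (r (ω, ω')) ∂(k ω)) * ℓ ω ∂μ = ∫⁻ ω, (∫⁻ ω', f (ω', ω) * min 1 (r (ω, ω')) ∂(k ω)) * ℓ ω ∂μ. -/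
open MeasureTheory ProbabilityTheory ENNReal

lemma aux_eq_one_ae {α} [MeasurableSpace α] (η : Measure α) [IsFiniteMeasure η]
    (c : α → ℝ≥0∞) (hc : Measurable c)
    (h : ∀ g : α → ℝ≥0∞, Measurable g → ∫⁻ p, g p * c p ∂η = ∫⁻ p, g p ∂η) :
    ∀ᵐ p ∂η, c p = 1 := by
  have hset : ∀ S : Set α, MeasurableSet S → ∫⁻ p in S, c p ∂η = η S := by
    intro S hS
    have := h (S.indicator 1) (measurable_one.indicator hS)
    have h2 : ∀ p, S.indicator (1 : α → ℝ≥0∞) p * c p = S.indicator c p := by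
      intro p; by_cases hp : p ∈ S <;> simp [hp]
    simp only [h2] at this
    rwa [lintegral_indicator hS, lintegral_indicator_one hS] at this
  have key : ∀ (S : Set α) (_ : MeasurableSet S) (φ : α → ℝ≥0∞) (_ : Measurable φ)
      (_ : ∀ p ∈ S, φ p < 1) (_ : ∫⁻ p in S, φ p ∂η = η S), η S = 0 := by
    intro S hS φ hφ hlt hint
    have hne : ∫⁻ p in S, φ p ∂η ≠ ∞ := by rw [hint]; exact (measure_lt_top η S).ne
    have hle : ∀ᵐ p ∂η.restrict S, φ p ≤ 1 :=
      (ae_restrict_mem hS).mono fun p hp => (hlt p hp).le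
    have hsub : ∫⁻ p in S, (1 - φ p) ∂η = 0 := by
      rw [lintegral_sub hφ hne hle, hint, setLIntegral_one, tsub_self]
    have h0 : ∀ᵐ p ∂η.restrict S, (1 - φ p) = 0 := by
      have := (lintegral_eq_zero_iff (measurable_const.sub hφ)).mp hsub
      filter_upwards [this] with p hp using hp
    have hFalse : ∀ᵐ p ∂η.restrict S, False := by
      filter_upwards [h0, ae_restrict_mem hS] with p h1 h2
      exact absurd h1 (tsub_pos_of_lt (hlt p h2)).ne'
    simpa [ae_iff, Measure.restrict_apply_univ] using hFalse
  -- the three null sets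
  have hA : η {p | c p = ∞} = 0 := by
    have hS : MeasurableSet {p | c p = ∞} := hc (measurableSet_singleton ∞)
    have h1 := hset _ hS
    have h2 : ∫⁻ p in {p | c p = ∞}, c p ∂η = ∞ * η {p | c p = ∞} := by
      rw [setLIntegral_congr_fun hS (fun p (hp : c p = ∞) => hp),
        setLIntegral_const]
    by_contra hne
    rw [h2, ENNReal.top_mul hne] at h1
    exact (measure_lt_top η _).ne h1.symm
  have hB : η {p | c p < 1} = 0 := by
    have hS : MeasurableSet {p | c p < 1} := measurableSet_lt hc measurable_const
    exact key _ hS c hc (fun p hp => hp) (hset _ hS)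
  have hD : η ({p | 1 < c p} ∩ {p | c p ≠ ∞}) = 0 := by
    set D := {p | 1 < c p} ∩ {p | c p ≠ ∞} with hDdef
    have hS : MeasurableSet D :=
      (measurableSet_lt measurable_const hc).inter (hc (measurableSet_singleton ∞)).compl
    have hg : Measurable fun p => D.indicator (fun q => (c q)⁻¹) p :=
      (hc.inv).indicator hS
    have h1 := h _ hg
    have h2 : ∀ p, D.indicator (fun q => (c q)⁻¹) p * c p = D.indicator (fun _ => 1) p := by
      intro p; by_cases hp : p ∈ D
      · simp only [Set.indicator_of_mem hp]
        exact ENNReal.inv_mul_cancel (zero_lt_one.trans hp.1).ne' hp.2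
      · simp [hp]
    simp only [h2] at h1
    rw [lintegral_indicator hS, lintegral_indicator hS] at h1
    refine key _ hS (fun p => (c p)⁻¹) hc.inv (fun p hp => ?_) (by
      rw [← h1]; simp [lintegral_indicator hS])
    exact ENNReal.inv_lt_one.mpr hp.1
  rw [ae_iff]
  refine measure_mono_null (t := {p | c p < 1} ∪ ({p | 1 < c p} ∩ {p | c p ≠ ∞} ∪ {p | c p = ∞})) (fun p hp => ?_) ?_
  · simp only [Set.mem_setOf_eq, Set.mem_union, Set.mem_inter_iff]
    rcases lt_or_gt_of_ne (hp : c p ≠ 1) with h' | h'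
    · exact Or.inl h'
    · by_cases h'' : c p = ∞
      · exact Or.inr (Or.inr h'')
      · exact Or.inr (Or.inl ⟨h', h''⟩)
  · exact measure_union_null hB (measure_union_null hD hA)


/-- Detailed balance for the accepted moves of the Metropolis–Hastings–Green dynamics
(underlying Theorem 5.2 of the paper): if `k` is Green with respect to `(μ, ℓ)` with
ratio `r`, then weighting proposals by the acceptance probability `min 1 (r (ω, ω'))`
yields a reversible (detailed-balance) joint measure. -/
theorem mhg_accepted_moves_detailed_balance
    {Ω : Type*} [MeasurableSpace Ω]
    (μ : Measure Ω) [IsProbabilityMeasure μ]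
    (ℓ : Ω → ℝ≥0∞) (hℓ : Measurable ℓ) (hℓint : ∫⁻ ω, ℓ ω ∂μ < ∞)
    (k : Kernel Ω Ω) [IsMarkovKernel k]
    (r : Ω × Ω → ℝ≥0∞) (hr : Measurable r)
    (hGreen : ∀ f : Ω × Ω → ℝ≥0∞, Measurable f →
      ∫⁻ ω, (∫⁻ ω', f (ω, ω') * r (ω, ω') ∂(k ω)) * ℓ ω ∂μ
        = ∫⁻ ω, (∫⁻ ω', f (ω', ω) ∂(k ω)) * ℓ ω ∂μ)
    (f : Ω × Ω → ℝ≥0∞) (hf : Measurable f) :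
    ∫⁻ ω, (∫⁻ ω', f (ω, ω') * min 1 (r (ω, ω')) ∂(k ω)) * ℓ ω ∂μ
      = ∫⁻ ω, (∫⁻ ω', f (ω', ω) * min 1 (r (ω, ω')) ∂(k ω)) * ℓ ω ∂μ := by
  haveI : IsFiniteMeasure (μ.withDensity ℓ) := isFiniteMeasure_withDensity hℓint.ne
  set η : Measure (Ω × Ω) := (μ.withDensity ℓ).compProd k with hηdef
  haveI : IsFiniteMeasure η := by rw [hηdef]; infer_instance
  -- transfer iterated integrals to η
  have hT : ∀ g : Ω × Ω → ℝ≥0∞, Measurable g →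
      ∫⁻ p, g p ∂η = ∫⁻ ω, (∫⁻ ω', g (ω, ω') ∂(k ω)) * ℓ ω ∂μ := by
    intro g hg
    have hmeas : Measurable fun ω => ∫⁻ ω', g (ω, ω') ∂(k ω) := by
      exact Measurable.lintegral_kernel_prod_right (f := fun a b => g (a, b)) hg
    rw [hηdef, Measure.lintegral_compProd hg,
      lintegral_withDensity_eq_lintegral_mul _ hℓ hmeas]
    exact lintegral_congr fun ω => mul_comm _ _
  -- Green identity at the level of η
  have hG : ∀ g : Ω × Ω → ℝ≥0∞, Measurable g →
      ∫⁻ p, g p * r p ∂η = ∫⁻ p, g p.swap ∂η := by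
    intro g hg
    rw [hT (fun p => g p * r p) (hg.mul hr),
      hT (fun p => g p.swap) (hg.comp measurable_swap)]
    exact hGreen g hg
  -- double Green
  have hGG : ∀ g : Ω × Ω → ℝ≥0∞, Measurable g →
      ∫⁻ p, g p * (r p * r p.swap) ∂η = ∫⁻ p, g p ∂η := by
    intro g hg
    calc ∫⁻ p, g p * (r p * r p.swap) ∂η
        = ∫⁻ p, (fun q => g q * r q.swap) p * r p ∂η :=
          lintegral_congr fun p => by simp; ring
      _ = ∫⁻ p, (fun q => g q * r q.swap) p.swap ∂η :=
          hG (fun q => g q * r q.swap) (hg.mul (hr.comp measurable_swap))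
      _ = ∫⁻ p, (fun q => g q.swap) p * r p ∂η := lintegral_congr fun p => by simp
      _ = ∫⁻ p, (fun q => g q.swap) p.swap ∂η :=
          hG (fun q => g q.swap) (hg.comp measurable_swap)
      _ = ∫⁻ p, g p ∂η := lintegral_congr fun p => by simp
  have hc1 : ∀ᵐ p ∂η, r p * r p.swap = 1 :=
    aux_eq_one_ae η _ (hr.mul (hr.comp measurable_swap)) hGG
  -- pointwise consequences of r p * r p.swap = 1
  have hkey : ∀ p : Ω × Ω, r p * r p.swap = 1 →
      ((r p.swap < 1 ↔ 1 < r p) ∧ (r p.swap = 1 ↔ r p = 1)) := by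
    intro p hp
    have h0 : r p ≠ 0 := by intro h; rw [h, zero_mul] at hp; exact zero_ne_one hp
    have ht : r p ≠ ∞ := by
      intro h; rw [h] at hp
      by_cases hb : r p.swap = 0
      · rw [hb, mul_zero] at hp; exact zero_ne_one hp
      · rw [ENNReal.top_mul hb] at hp; exact (ENNReal.top_ne_one) hp
    have hswap : r p.swap = (r p)⁻¹ := by
      calc r p.swap = (r p)⁻¹ * (r p * r p.swap) := by
            rw [← mul_assoc, ENNReal.inv_mul_cancel h0 ht, one_mul]
        _ = (r p)⁻¹ := by rw [hp, mul_one]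
    refine ⟨?_, ?_⟩
    · rw [hswap]; exact ENNReal.inv_lt_one
    · rw [hswap]; exact ENNReal.inv_eq_one
  -- sets
  set A1 : Set (Ω × Ω) := {p | r p < 1} with hA1def
  set A2 : Set (Ω × Ω) := {p | r p = 1} with hA2def
  set A3 : Set (Ω × Ω) := {p | 1 < r p} with hA3def
  have hA1 : MeasurableSet A1 := measurableSet_lt hr measurable_const
  have hA2 : MeasurableSet A2 := hr (measurableSet_singleton 1)
  have hA3 : MeasurableSet A3 := measurableSet_lt measurable_const hr
  have hfs : Measurable fun p : Ω × Ω => f p.swap := hf.comp measurable_swap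
  -- splitting of min 1 r
  have hsplit : ∀ (h : Ω × Ω → ℝ≥0∞) (p : Ω × Ω), h p * min 1 (r p) =
      A1.indicator h p * r p + (A2.indicator h p * r p + A3.indicator h p) := by
    intro h p
    rcases lt_trichotomy (r p) 1 with hlt | heq | hgt
    · simp [hA1def, hA2def, hA3def, Set.indicator, hlt, hlt.ne, not_lt.mpr hlt.le,
        min_eq_right hlt.le]
    · simp [hA1def, hA2def, hA3def, Set.indicator, heq]
    · simp [hA1def, hA2def, hA3def, Set.indicator, hgt, not_lt.mpr hgt.le, hgt.ne',
        min_eq_left hgt.le]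
  -- additivity helper
  have hadd : ∀ (h : Ω × Ω → ℝ≥0∞), Measurable h →
      ∫⁻ p, h p * min 1 (r p) ∂η =
        (∫⁻ p, A1.indicator h p * r p ∂η) +
          ((∫⁻ p, A2.indicator h p * r p ∂η) + (∫⁻ p, A3.indicator h p ∂η)) := by
    intro h hh
    rw [lintegral_congr (hsplit h),
      lintegral_add_left (show Measurable fun p => A1.indicator h p * r p from (hh.indicator hA1).mul hr),
      lintegral_add_left (show Measurable fun p => A2.indicator h p * r p from (hh.indicator hA2).mul hr)]
  -- swapped indicator identities (pointwise)
  have hswp : ∀ (h : Ω × Ω → ℝ≥0∞) (S : Set ℝ≥0∞) (p : Ω × Ω),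
      ({q : Ω × Ω | r q ∈ S}.indicator h) p.swap
        = {q : Ω × Ω | r q.swap ∈ S}.indicator (fun q => h q.swap) p := by
    intro h S p
    by_cases hp : r p.swap ∈ S <;> simp [Set.indicator, hp]
  -- generic Green + a.e. rewriting step for indicator pieces
  have egen : ∀ (h : Ω × Ω → ℝ≥0∞), Measurable h → ∀ (A T : Set (Ω × Ω)),
      MeasurableSet A →
      (∀ p : Ω × Ω, r p * r p.swap = 1 → (p.swap ∈ A ↔ p ∈ T)) →
      ∫⁻ p, A.indicator h p * r p ∂η
        = ∫⁻ p, T.indicator (fun q => h q.swap) p ∂η := by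
    intro h hh A T hmA hiff
    classical
    rw [hG (A.indicator h) (hh.indicator hmA)]
    calc ∫⁻ p, A.indicator h p.swap ∂η
        = ∫⁻ p, (Prod.swap ⁻¹' A).indicator (fun q => h q.swap) p ∂η :=
          lintegral_congr fun p => by
            by_cases hp : p.swap ∈ A <;>
              simp [Set.indicator, hp, Set.mem_preimage]
      _ = ∫⁻ p, T.indicator (fun q => h q.swap) p ∂η := by
          refine lintegral_congr_ae ?_
          filter_upwards [hc1] with p hp
          simp only [Set.indicator, Set.mem_preimage]
          exact if_congr (hiff p hp) rfl rfl
  -- on A2, multiplying by r does nothing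
  have hA2r : ∀ (h : Ω × Ω → ℝ≥0∞) (p : Ω × Ω),
      A2.indicator h p * r p = A2.indicator h p := by
    intro h p
    by_cases hp : p ∈ A2
    · have : r p = 1 := hp
      simp [Set.indicator, hp, this]
    · simp [Set.indicator, hp]
  -- the six pieces
  have e1 : ∫⁻ p, A1.indicator f p * r p ∂η
      = ∫⁻ p, A3.indicator (fun q => f q.swap) p ∂η :=
    egen f hf A1 A3 hA1 (fun p hp => by
      simpa [hA1def, hA3def] using (hkey p hp).1)
  have e2 : ∫⁻ p, A2.indicator f p * r p ∂η
      = ∫⁻ p, A2.indicator (fun q => f q.swap) p ∂η :=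
    egen f hf A2 A2 hA2 (fun p hp => by
      simpa [hA2def] using (hkey p hp).2)
  have e1' : ∫⁻ p, A1.indicator (fun q => f q.swap) p * r p ∂η
      = ∫⁻ p, A3.indicator f p ∂η := by
    refine (egen (fun q => f q.swap) hfs A1 A3 hA1 (fun p hp => by
      simpa [hA1def, hA3def] using (hkey p hp).1)).trans
      (lintegral_congr fun p => ?_)
    by_cases hp : p ∈ A3 <;> simp [Set.indicator, hp]
  have e2' : ∫⁻ p, A2.indicator (fun q => f q.swap) p * r p ∂η
      = ∫⁻ p, A2.indicator f p ∂η := by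
    refine (egen (fun q => f q.swap) hfs A2 A2 hA2 (fun p hp => by
      simpa [hA2def] using (hkey p hp).2)).trans
      (lintegral_congr fun p => ?_)
    by_cases hp : p ∈ A2 <;> simp [Set.indicator, hp]
  have e3 : ∫⁻ p, A2.indicator f p ∂η
      = ∫⁻ p, A2.indicator (fun q => f q.swap) p ∂η := by
    rw [← e2]
    exact (lintegral_congr fun p => (hA2r f p)).symm
  -- the main identity at the level of η
  have hmain : ∫⁻ p, f p * min 1 (r p) ∂η = ∫⁻ p, f p.swap * min 1 (r p) ∂η := by
    have L := hadd f hf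
    have R : ∫⁻ p, f p.swap * min 1 (r p) ∂η =
        (∫⁻ p, A1.indicator (fun q => f q.swap) p * r p ∂η) +
          ((∫⁻ p, A2.indicator (fun q => f q.swap) p * r p ∂η) +
            (∫⁻ p, A3.indicator (fun q => f q.swap) p ∂η)) :=
      hadd (fun q => f q.swap) hfs
    rw [L, R, e1, e2, e1', e2', ← e3]
    ring
  -- transfer back to the iterated-integral statement
  calc ∫⁻ ω, (∫⁻ ω', f (ω, ω') * min 1 (r (ω, ω')) ∂(k ω)) * ℓ ω ∂μ
      = ∫⁻ p, f p * min 1 (r p) ∂η :=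
        (hT (fun p => f p * min 1 (r p)) (hf.mul (measurable_const.min hr))).symm
    _ = ∫⁻ p, f p.swap * min 1 (r p) ∂η := hmain
    _ = ∫⁻ ω, (∫⁻ ω', f (ω', ω) * min 1 (r (ω, ω')) ∂(k ω)) * ℓ ω ∂μ :=
        hT (fun p => f p.swap * min 1 (r p)) (hfs.mul (measurable_const.min hr))
end

section
/- Let Ω be a measurable space, μ a probability measure on Ω, ℓ : Ω → ℝ≥0∞ measurable with ∫⁻ ω, ℓ ω ∂μ < ∞, k a Markov kernel on Ω, and r : Ω × Ω → ℝ≥0∞ measurable, such that k is Green with respect to (μ, ℓ) with ratio r. Define the Metropolis–Hastings–Green kernel κMHG : Ω → Measure Ω by κMHG ω = (k ω).withDensity (fun ω' => min 1 (r (ω, ω'))) + (1 - ∫⁻ ω', min 1 (r (ω, ω')) ∂(k ω)) • Measure.dirac ω. Then the unnormalized measure μ.withDensity ℓ is stationary for κMHG: for every measurable set U, ∫⁻ ω, (κMHG ω) U ∂(μ.withDensity ℓ) = (μ.withDensity ℓ) U. -/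
open MeasureTheory ProbabilityTheory ENNReal

private lemma mhg_min_mul_aux (s t : ℝ≥0∞) : min 1 s * t = min t (t * s) := by
  rcases le_total 1 s with h | h
  · rw [min_eq_left h, one_mul, min_eq_left]
    calc t = t * 1 := (mul_one t).symm
    _ ≤ t * s := mul_le_mul_right h t
  · rw [min_eq_right h, min_eq_right, mul_comm]
    calc t * s ≤ t * 1 := mul_le_mul_right h t
    _ = t := mul_one t

/-- First assertion of Theorem 5.2 of the paper (Metropolis–Hastings–Green): if `k` is
Green with respect to `(μ, ℓ)` with ratio `r`, then the unnormalized measure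
`μ.withDensity ℓ` is stationary for the Metropolis–Hastings–Green kernel, which proposes
`ω' ∼ k(ω, ·)` and accepts with probability `min 1 (r (ω, ω'))`, otherwise staying at `ω`. -/
theorem mhg_stationary
    {Ω : Type*} [MeasurableSpace Ω]
    (μ : Measure Ω) [IsProbabilityMeasure μ]
    (ℓ : Ω → ℝ≥0∞) (hℓ : Measurable ℓ) (hℓint : ∫⁻ ω, ℓ ω ∂μ < ∞)
    (k : Kernel Ω Ω) [IsMarkovKernel k]
    (r : Ω × Ω → ℝ≥0∞) (hr : Measurable r)
    (hGreen : ∀ f : Ω × Ω → ℝ≥0∞, Measurable f →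
      ∫⁻ ω, (∫⁻ ω', f (ω, ω') * r (ω, ω') ∂(k ω)) * ℓ ω ∂μ
        = ∫⁻ ω, (∫⁻ ω', f (ω', ω) ∂(k ω)) * ℓ ω ∂μ)
    (κMHG : Ω → Measure Ω)
    (hκ : κMHG = fun ω =>
      (k ω).withDensity (fun ω' => min 1 (r (ω, ω')))
        + (1 - ∫⁻ ω', min 1 (r (ω, ω')) ∂(k ω)) • Measure.dirac ω) :
    ∀ U : Set Ω, MeasurableSet U →
      ∫⁻ ω, (κMHG ω) U ∂(μ.withDensity ℓ) = (μ.withDensity ℓ) U := by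
  classical
  intro U hU
  set π : Measure Ω := μ.withDensity ℓ with hπ
  have hπfin : IsFiniteMeasure π := isFiniteMeasure_withDensity hℓint.ne
  set ν : Measure (Ω × Ω) := π.compProd k with hν
  have hνfin : IsFiniteMeasure ν := inferInstance
  have hrs : Measurable fun p : Ω × Ω => r p.swap := hr.comp measurable_swap
  -- iterated integral formula for ν
  have hint : ∀ f : Ω × Ω → ℝ≥0∞, Measurable f →
      ∫⁻ p, f p ∂ν = ∫⁻ ω, ∫⁻ ω', f (ω, ω') ∂(k ω) ∂π := by
    intro f hf
    rw [hν, Measure.lintegral_compProd hf]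
  have hintμ : ∀ f : Ω × Ω → ℝ≥0∞, Measurable f →
      ∫⁻ p, f p ∂ν = ∫⁻ ω, (∫⁻ ω', f (ω, ω') ∂(k ω)) * ℓ ω ∂μ := by
    intro f hf
    have hm : Measurable fun ω => ∫⁻ ω', f (ω, ω') ∂(k ω) := by
      apply Measurable.lintegral_kernel_prod_right (f := fun ω ω' => f (ω, ω'))
      exact hf.comp (measurable_fst.prodMk measurable_snd)
    rw [hint f hf, hπ, lintegral_withDensity_eq_lintegral_mul _ hℓ hm]
    exact lintegral_congr fun ω => mul_comm _ _
  -- Green property in terms of ν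
  have hG : ∀ f : Ω × Ω → ℝ≥0∞, Measurable f →
      ∫⁻ p, f p * r p ∂ν = ∫⁻ p, f p.swap ∂ν := by
    intro f hf
    calc ∫⁻ p, f p * r p ∂ν
        = ∫⁻ ω, (∫⁻ ω', f (ω, ω') * r (ω, ω') ∂(k ω)) * ℓ ω ∂μ :=
          hintμ (fun p => f p * r p) (hf.mul hr)
      _ = ∫⁻ ω, (∫⁻ ω', f (ω', ω) ∂(k ω)) * ℓ ω ∂μ := hGreen f hf
      _ = ∫⁻ p, f p.swap ∂ν := (hintμ (fun p => f p.swap) (hf.comp measurable_swap)).symm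
  -- the ratio satisfies r(x,y) * r(y,x) = 1 ν-a.e.
  have hc : ∀ f : Ω × Ω → ℝ≥0∞, Measurable f →
      ∫⁻ p, f p * (r p * r p.swap) ∂ν = ∫⁻ p, f p ∂ν := by
    intro f hf
    calc ∫⁻ p, f p * (r p * r p.swap) ∂ν
        = ∫⁻ p, (fun q : Ω × Ω => f q * r q.swap) p * r p ∂ν := by
          refine lintegral_congr fun p => ?_
          simp only []
          ring
      _ = ∫⁻ p, (fun q : Ω × Ω => f q * r q.swap) p.swap ∂ν := hG _ (hf.mul hrs)
      _ = ∫⁻ p, (fun q : Ω × Ω => f q.swap) p * r p ∂ν := by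
          refine lintegral_congr fun p => ?_
          simp
      _ = ∫⁻ p, (fun q : Ω × Ω => f q.swap) p.swap ∂ν := hG _ (hf.comp measurable_swap)
      _ = ∫⁻ p, f p ∂ν := by simp
  have hcm : Measurable fun p : Ω × Ω => r p * r p.swap := hr.mul hrs
  have hae : (fun p : Ω × Ω => r p * r p.swap) =ᵐ[ν] fun _ => 1 := by
    refine ae_eq_of_forall_setLIntegral_eq_of_sigmaFinite hcm measurable_const
      fun s hs _ => ?_
    have h := hc (s.indicator 1) (measurable_one.indicator hs)
    have h1 : ∫⁻ p, s.indicator 1 p * (r p * r p.swap) ∂ν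
        = ∫⁻ p, s.indicator (fun q => r q * r q.swap) p ∂ν := by
      refine lintegral_congr fun p => ?_
      by_cases hp : p ∈ s <;> simp [Set.indicator_of_mem, Set.indicator_of_notMem, hp]
    rw [h1, lintegral_indicator hs, lintegral_indicator hs] at h
    simpa using h
  -- key symmetry
  have hkey : ∫⁻ p, U.indicator 1 p.2 * min 1 (r p) ∂ν
      = ∫⁻ p, U.indicator 1 p.1 * min 1 (r p) ∂ν := by
    have hfm : Measurable fun p : Ω × Ω => U.indicator 1 p.2 * min 1 (r p.swap) :=
      ((measurable_one.indicator hU).comp measurable_snd).mul (measurable_const.min hrs)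
    have h := hG _ hfm
    have h2 : ∫⁻ p, (fun q : Ω × Ω => U.indicator 1 q.2 * min 1 (r q.swap)) p.swap ∂ν
        = ∫⁻ p, U.indicator 1 p.1 * min 1 (r p) ∂ν := by
      refine lintegral_congr fun p => ?_
      simp
    rw [h2] at h
    rw [← h]
    refine lintegral_congr_ae ?_
    filter_upwards [hae] with p hp
    rw [mul_assoc, mhg_min_mul_aux, hp]
    simp [min_comm]
  -- acceptance probability integral
  set t : Ω → ℝ≥0∞ := fun ω => ∫⁻ ω', min 1 (r (ω, ω')) ∂(k ω) with htdef
  have ht : Measurable t := by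
    apply Measurable.lintegral_kernel_prod_right (f := fun ω ω' => min 1 (r (ω, ω')))
    exact measurable_const.min (hr.comp (measurable_fst.prodMk measurable_snd))
  have ht1 : ∀ ω, t ω ≤ 1 := by
    intro ω
    calc t ω ≤ ∫⁻ _ω', 1 ∂(k ω) := lintegral_mono fun _ => min_le_left _ _
    _ = 1 := by simp
  -- expand the kernel
  have hκU : ∀ ω, (κMHG ω) U
      = (∫⁻ ω', U.indicator 1 ω' * min 1 (r (ω, ω')) ∂(k ω)) + (1 - t ω) * U.indicator 1 ω := by
    intro ω
    rw [hκ]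
    simp only [Measure.coe_add, Pi.add_apply, Measure.smul_apply, smul_eq_mul]
    rw [withDensity_apply _ hU, Measure.dirac_apply' _ hU]
    congr 1
    rw [← lintegral_indicator hU]
    refine lintegral_congr fun ω' => ?_
    by_cases h : ω' ∈ U <;> simp [Set.indicator_of_mem, Set.indicator_of_notMem, h]
  have hS1 : ∫⁻ ω, (∫⁻ ω', U.indicator 1 ω' * min 1 (r (ω, ω')) ∂(k ω)) ∂π
      = ∫⁻ p, U.indicator 1 p.2 * min 1 (r p) ∂ν :=
    (hint (fun p => U.indicator 1 p.2 * min 1 (r p))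
      (((measurable_one.indicator hU).comp measurable_snd).mul
        (measurable_const.min hr))).symm
  have hS2 : ∫⁻ p, U.indicator 1 p.1 * min 1 (r p) ∂ν = ∫⁻ ω, U.indicator 1 ω * t ω ∂π := by
    refine (hint (fun p => U.indicator 1 p.1 * min 1 (r p))
      (((measurable_one.indicator hU).comp measurable_fst).mul
        (measurable_const.min hr))).trans ?_
    refine lintegral_congr fun ω => ?_
    exact lintegral_const_mul (U.indicator 1 ω)
      (show Measurable fun ω' => min 1 (r (ω, ω')) from
        measurable_const.min (hr.comp measurable_prodMk_left))
  calc ∫⁻ ω, (κMHG ω) U ∂π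
      = ∫⁻ ω, ((∫⁻ ω', U.indicator 1 ω' * min 1 (r (ω, ω')) ∂(k ω))
          + (1 - t ω) * U.indicator 1 ω) ∂π := lintegral_congr fun ω => hκU ω
    _ = ∫⁻ ω, (∫⁻ ω', U.indicator 1 ω' * min 1 (r (ω, ω')) ∂(k ω)) ∂π
          + ∫⁻ ω, (1 - t ω) * U.indicator 1 ω ∂π := by
        refine lintegral_add_right _ ?_
        exact (measurable_const.sub ht).mul (measurable_one.indicator hU)
    _ = ∫⁻ ω, U.indicator 1 ω * t ω ∂π + ∫⁻ ω, (1 - t ω) * U.indicator 1 ω ∂π := by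
        rw [hS1, hkey, hS2]
    _ = ∫⁻ ω, (U.indicator 1 ω * t ω + (1 - t ω) * U.indicator 1 ω) ∂π := by
        refine (lintegral_add_right _ ?_).symm
        exact (measurable_const.sub ht).mul (measurable_one.indicator hU)
    _ = ∫⁻ ω, U.indicator 1 ω ∂π := by
        refine lintegral_congr fun ω => ?_
        rw [mul_comm ((1 : ℝ≥0∞) - t ω), ← mul_add, add_tsub_cancel_of_le (ht1 ω), mul_one]
    _ = π U := lintegral_indicator_one hU
end

section
/- Let Ω be a measurable space which is standard Borel, let κ be a Markov kernel on Ω, and let ν be a probability measure on Ω that is stationary for κ, i.e. ν.bind κ = ν. Suppose κ is irreducible with respect to ν: for every ω ∈ Ω and every measurable set U with ν U > 0 there exists n ≥ 1 with ((fun m => m.bind κ)^[n] (Measure.dirac ω)) U > 0. Then ν is the unique stationary probability measure of κ: every probability measure ν' on Ω with ν'.bind κ = ν' satisfies ν' = ν. -/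
open MeasureTheory ProbabilityTheory
open scoped ENNReal

namespace MHGUnique

variable {Ω : Type*} [MeasurableSpace Ω]

/-- The `n`-step transition kernel. -/
noncomputable def iterK (κ : Kernel Ω Ω) : ℕ → Kernel Ω Ω
  | 0 => Kernel.id
  | n + 1 => κ.comp (iterK κ n)

lemma bind_iterK (κ : Kernel Ω Ω) : ∀ (n : ℕ) (m : Measure Ω),
    (fun m : Measure Ω => m.bind (fun ω => κ ω))^[n] m = m.bind (fun ω => iterK κ n ω)
  | 0, m => by
      simp only [Function.iterate_zero, id_eq, iterK, Kernel.id_apply, Measure.bind_dirac]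
  | n + 1, m => by
      rw [Function.iterate_succ_apply', bind_iterK κ n m]
      rw [Measure.bind_bind (iterK κ n).measurable.aemeasurable κ.measurable.aemeasurable]
      simp only [iterK, Kernel.comp_apply]

lemma bind_mass (κ : Kernel Ω Ω) [IsMarkovKernel κ] (m : Measure Ω) :
    m.bind (fun ω => κ ω) Set.univ = m Set.univ := by
  rw [Measure.bind_apply MeasurableSet.univ κ.measurable.aemeasurable]
  simp [measure_univ]

lemma bind_mono (κ : Kernel Ω Ω) {m₁ m₂ : Measure Ω} (h : m₁ ≤ m₂) :
    m₁.bind (fun ω => κ ω) ≤ m₂.bind (fun ω => κ ω) := by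
  refine Measure.le_iff.2 fun s hs => ?_
  rw [Measure.bind_apply hs κ.measurable.aemeasurable,
    Measure.bind_apply hs κ.measurable.aemeasurable]
  exact lintegral_mono' h le_rfl

lemma bind_add (κ : Kernel Ω Ω) (m₁ m₂ : Measure Ω) :
    (m₁ + m₂).bind (fun ω => κ ω)
      = m₁.bind (fun ω => κ ω) + m₂.bind (fun ω => κ ω) := by
  ext s hs
  rw [Measure.bind_apply hs κ.measurable.aemeasurable, Measure.add_apply,
    Measure.bind_apply hs κ.measurable.aemeasurable, Measure.bind_apply hs κ.measurable.aemeasurable,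
    lintegral_add_measure]

lemma bind_smul (κ : Kernel Ω Ω) (c : ℝ≥0∞) (m : Measure Ω) :
    (c • m).bind (fun ω => κ ω) = c • m.bind (fun ω => κ ω) := by
  ext s hs
  simp only [Measure.bind_apply hs κ.measurable.aemeasurable, Measure.smul_apply,
    lintegral_smul_measure, smul_eq_mul]

/-- a measure below another with the same finite mass equals it -/
lemma eq_of_le_of_mass_eq {m₁ m₂ : Measure Ω} (h : m₁ ≤ m₂)
    (hmass : m₁ Set.univ = m₂ Set.univ) (hfin : m₂ Set.univ ≠ ⊤) : m₁ = m₂ := by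
  ext s hs
  have h1 : m₁ s ≤ m₂ s := h s
  have h2 : m₁ sᶜ ≤ m₂ sᶜ := h sᶜ
  have e1 : m₁ s + m₁ sᶜ = m₂ s + m₂ sᶜ := by
    rw [measure_add_measure_compl hs, measure_add_measure_compl hs, hmass]
  have hfin' : m₂ sᶜ ≠ ⊤ := fun h' => hfin (by
    refine eq_top_iff.2 ?_
    rw [← measure_add_measure_compl (μ := m₂) hs, h']
    simp)
  refine le_antisymm h1 ?_
  have : m₂ s + m₁ sᶜ ≤ m₁ s + m₁ sᶜ := by
    rw [e1]; exact add_le_add le_rfl h2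
  have hfin'' : m₁ sᶜ ≠ ⊤ := fun h' => hfin' (eq_top_iff.2 (h' ▸ h2))
  exact (ENNReal.add_le_add_iff_right hfin'').1 this

lemma add_left_cancel_meas {ρ m₁ m₂ : Measure Ω} [IsFiniteMeasure ρ]
    (h : ρ + m₁ = ρ + m₂) : m₁ = m₂ := by
  ext s hs
  have := congrArg (fun m : Measure Ω => m s) h
  simp only [Measure.add_apply] at this
  exact (ENNReal.add_right_inj (measure_ne_top ρ s)).1 this


lemma bind_iterK_stationary (κ : Kernel Ω Ω) {μ : Measure Ω}
    (hμ : μ.bind (fun ω => κ ω) = μ) (n : ℕ) :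
    μ.bind (fun ω => iterK κ n ω) = μ := by
  rw [← bind_iterK κ n μ, Function.iterate_fixed hμ]

/-- Lemma A: any stationary probability measure charges every `ν`-positive set. -/
lemma pos_of_stationary (κ : Kernel Ω Ω) (ν : Measure Ω) [IsProbabilityMeasure ν]
    (hirr : ∀ ω : Ω, ∀ U : Set Ω, MeasurableSet U → ν U > 0 →
      ∃ n ≥ 1, ((fun m : Measure Ω => m.bind (fun ω' => κ ω'))^[n] (Measure.dirac ω)) U > 0)
    (μ : Measure Ω) [IsProbabilityMeasure μ]
    (hμ : μ.bind (fun ω => κ ω) = μ)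
    {U : Set Ω} (hU : MeasurableSet U) (hνU : 0 < ν U) : 0 < μ U := by
  by_contra hcon
  have hμU : μ U = 0 := by simpa using (not_lt.1 hcon)
  have hae : ∀ᵐ ω ∂μ, ∀ n : ℕ, iterK κ n ω U = 0 := by
    rw [ae_all_iff]
    intro n
    have h0 : ∫⁻ ω, iterK κ n ω U ∂μ = 0 := by
      rw [← Measure.bind_apply hU (iterK κ n).measurable.aemeasurable, bind_iterK_stationary κ hμ n, hμU]
    exact (lintegral_eq_zero_iff (Kernel.measurable_coe _ hU)).1 h0
  haveI : (ae μ).NeBot := ae_neBot.2 (IsProbabilityMeasure.ne_zero μ)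
  obtain ⟨ω, hω⟩ := hae.exists
  obtain ⟨n, -, hpos⟩ := hirr ω U hU hνU
  rw [bind_iterK κ n (Measure.dirac ω), Measure.dirac_bind (iterK κ n).measurable] at hpos
  exact absurd (hω n) hpos.ne'


lemma bind_ac (κ : Kernel Ω Ω) {ν : Measure Ω}
    (hstat : ν.bind (fun ω => κ ω) = ν) {a : Measure Ω} (ha : a ≪ ν) :
    a.bind (fun ω => κ ω) ≪ ν := by
  refine Measure.AbsolutelyContinuous.mk fun s hs hνs => ?_
  have h0 : ∫⁻ ω, κ ω s ∂ν = 0 := by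
    rw [← Measure.bind_apply hs κ.measurable.aemeasurable, hstat]; exact hνs
  have hae : (fun ω => κ ω s) =ᵐ[ν] 0 :=
    (lintegral_eq_zero_iff (Kernel.measurable_coe κ hs)).1 h0
  rw [Measure.bind_apply hs κ.measurable.aemeasurable]
  exact (lintegral_eq_zero_iff (Kernel.measurable_coe κ hs)).2 (ha.ae_le hae)

/-- Lemma B0: any stationary probability measure is absolutely continuous w.r.t. `ν`. -/
lemma ac_of_stationary (κ : Kernel Ω Ω) [IsMarkovKernel κ]
    (ν : Measure Ω) [IsProbabilityMeasure ν]
    (hstat : ν.bind (fun ω => κ ω) = ν)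
    (hirr : ∀ ω : Ω, ∀ U : Set Ω, MeasurableSet U → ν U > 0 →
      ∃ n ≥ 1, ((fun m : Measure Ω => m.bind (fun ω' => κ ω'))^[n] (Measure.dirac ω)) U > 0)
    (μ : Measure Ω) [IsProbabilityMeasure μ]
    (hμ : μ.bind (fun ω => κ ω) = μ) : μ ≪ ν := by
  set t := μ.singularPart ν with ht
  have hdec : μ = t + ν.withDensity (μ.rnDeriv ν) := Measure.haveLebesgueDecomposition_add μ ν
  haveI hft : IsFiniteMeasure t := isFiniteMeasure_of_le μ (Measure.singularPart_le μ ν)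
  set tκ := t.bind (fun ω => κ ω) with htκ
  have htmass : tκ Set.univ = t Set.univ := bind_mass κ t
  haveI : IsFiniteMeasure tκ := ⟨by rw [htmass]; exact measure_lt_top t _⟩
  set a := ν.withDensity (μ.rnDeriv ν) with haa
  set aκ := a.bind (fun ω => κ ω) with haκ
  haveI : IsFiniteMeasure a := isFiniteMeasure_of_le μ (by rw [hdec]; exact Measure.le_add_left le_rfl)
  have hamass : aκ Set.univ = a Set.univ := bind_mass κ a
  haveI : IsFiniteMeasure aκ := ⟨by rw [hamass]; exact measure_lt_top a _⟩
  have haκν : aκ ≪ ν := bind_ac κ hstat (withDensity_absolutelyContinuous ν _)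
  have hdec2 : tκ = tκ.singularPart ν + ν.withDensity (tκ.rnDeriv ν) :=
    Measure.haveLebesgueDecomposition_add tκ ν
  set a2 := ν.withDensity (tκ.rnDeriv ν) + aκ with ha2
  have ha2ν : a2 ≪ ν := (withDensity_absolutelyContinuous ν _).add_left haκν
  haveI : IsFiniteMeasure (ν.withDensity (tκ.rnDeriv ν)) :=
    isFiniteMeasure_of_le tκ (le_of_le_of_eq (Measure.le_add_left le_rfl) hdec2.symm)
  haveI : IsFiniteMeasure a2 := by rw [ha2]; infer_instance
  have ha2eq : ν.withDensity (a2.rnDeriv ν) = a2 := Measure.withDensity_rnDeriv_eq a2 ν ha2ν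
  have h1 : μ = tκ + aκ := by
    conv_lhs => rw [← hμ, hdec, bind_add]
  have hμeq0 : μ = tκ.singularPart ν + (ν.withDensity (tκ.rnDeriv ν) + aκ) := by
    rw [← add_assoc, ← hdec2]; exact h1
  have hμeq : μ = tκ.singularPart ν + ν.withDensity (a2.rnDeriv ν) := by
    rw [ha2eq, ha2]; exact hμeq0
  have hts : tκ.singularPart ν = t := by
    rw [ht]
    exact Measure.eq_singularPart (Measure.measurable_rnDeriv a2 ν)
      (Measure.mutuallySingular_singularPart tκ ν) hμeq
  have htfix : tκ = t := by
    rw [hts] at hdec2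
    have hz : ν.withDensity (tκ.rnDeriv ν) Set.univ = 0 := by
      have := congrArg (fun m : Measure Ω => m Set.univ) hdec2
      simp only [Measure.add_apply] at this
      rw [htmass] at this
      exact ((ENNReal.add_right_inj (measure_ne_top t _)).1
        (by rw [← this, add_zero])).symm
    have : ν.withDensity (tκ.rnDeriv ν) = 0 := Measure.measure_univ_eq_zero.1 hz
    rw [hdec2, this, add_zero]
  rcases eq_or_ne t 0 with h0 | hne
  · rw [hdec, h0, zero_add]; exact withDensity_absolutelyContinuous ν _
  · exfalso
    set c := t Set.univ with hc
    have hc0 : c ≠ 0 := fun h => hne (Measure.measure_univ_eq_zero.1 h)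
    have hcT : c ≠ ⊤ := measure_ne_top t _
    haveI hprob2 : IsProbabilityMeasure (c⁻¹ • t) :=
      ⟨by simp [Measure.smul_apply, smul_eq_mul, ← hc, ENNReal.inv_mul_cancel hc0 hcT]⟩
    have hstat2 : (c⁻¹ • t).bind (fun ω => κ ω) = c⁻¹ • t := by
      rw [bind_smul, ← htκ, htfix]
    obtain ⟨S, hSm, htS, hνS⟩ := Measure.mutuallySingular_singularPart μ ν
    have hνSpos : 0 < ν S := by
      have h1 : ν S + ν Sᶜ = 1 := by rw [measure_add_measure_compl hSm, measure_univ]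
      rw [hνS, add_zero] at h1
      rw [h1]; exact zero_lt_one
    have hpos := pos_of_stationary κ ν hirr (c⁻¹ • t) hstat2 hSm hνSpos
    have htS' : t S = 0 := by rw [ht]; exact htS
    rw [Measure.smul_apply, htS', smul_zero] at hpos
    exact lt_irrefl 0 hpos

end MHGUnique

open MHGUnique in
/-- Uniqueness assertion of Theorem 5.2 of the paper (Metropolis–Hastings–Green): on a
standard Borel space, a stationary probability measure `ν` of a Markov kernel `κ` that is
irreducible with respect to `ν` is the unique stationary probability measure of `κ`. -/
theorem stationary_unique_of_irreducible
    {Ω : Type*} [MeasurableSpace Ω] [StandardBorelSpace Ω]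
    (κ : Kernel Ω Ω) [IsMarkovKernel κ]
    (ν : Measure Ω) [IsProbabilityMeasure ν]
    (hstat : ν.bind (fun ω => κ ω) = ν)
    (hirr : ∀ ω : Ω, ∀ U : Set Ω, MeasurableSet U → ν U > 0 →
      ∃ n ≥ 1, ((fun m : Measure Ω => m.bind (fun ω' => κ ω'))^[n] (Measure.dirac ω)) U > 0)
    (ν' : Measure Ω) [IsProbabilityMeasure ν']
    (hstat' : ν'.bind (fun ω => κ ω) = ν') :
    ν' = ν := by
  have hac : ν' ≪ ν := ac_of_stationary κ ν hstat hirr ν' hstat'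
  set f := ν'.rnDeriv ν with hfdef
  have hfm : Measurable f := Measure.measurable_rnDeriv ν' ν
  have hν'eq : ν.withDensity f = ν' := Measure.withDensity_rnDeriv_eq ν' ν hac
  set g : Ω → ℝ≥0∞ := fun ω => min (f ω) 1 with hgdef
  have hgm : Measurable g := hfm.min measurable_const
  set ρ := ν.withDensity g with hρdef
  have hρν : ρ ≤ ν := by
    rw [hρdef]
    calc ν.withDensity g ≤ ν.withDensity (fun _ => 1) :=
          withDensity_mono (Filter.Eventually.of_forall fun ω => min_le_right _ _)
      _ = ν := withDensity_one
  have hρν' : ρ ≤ ν' := by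
    rw [hρdef, ← hν'eq]
    exact withDensity_mono (Filter.Eventually.of_forall fun ω => min_le_left _ _)
  haveI : IsFiniteMeasure ρ := isFiniteMeasure_of_le ν hρν
  have hρκle : ρ.bind (fun ω => κ ω) ≤ ν := le_of_le_of_eq (bind_mono κ hρν) hstat
  have hρκle' : ρ.bind (fun ω => κ ω) ≤ ν' := le_of_le_of_eq (bind_mono κ hρν') hstat'
  haveI : IsFiniteMeasure (ρ.bind (fun ω => κ ω)) := isFiniteMeasure_of_le ν hρκle
  set h := (ρ.bind (fun ω => κ ω)).rnDeriv ν with hhdef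
  have hhm : Measurable h := Measure.measurable_rnDeriv _ _
  have hwd : ν.withDensity h = ρ.bind (fun ω => κ ω) :=
    Measure.withDensity_rnDeriv_eq _ _ (Measure.absolutelyContinuous_of_le hρκle)
  have hh1 : h ≤ᵐ[ν] fun _ => 1 := by
    refine ae_le_of_forall_setLIntegral_le_of_sigmaFinite hhm fun s hs _ => ?_
    rw [← withDensity_apply h hs, hwd, setLIntegral_one]
    exact hρκle s
  have hhf : h ≤ᵐ[ν] f := by
    refine ae_le_of_forall_setLIntegral_le_of_sigmaFinite hhm fun s hs _ => ?_
    rw [← withDensity_apply h hs, hwd, ← withDensity_apply f hs, hν'eq]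
    exact hρκle' s
  have hhg : h ≤ᵐ[ν] g := by
    filter_upwards [hh1, hhf] with ω h1 h2
    exact le_min h2 h1
  have hbindle : ρ.bind (fun ω => κ ω) ≤ ρ := by
    rw [← hwd, hρdef]; exact withDensity_mono hhg
  have hmass : (ρ.bind (fun ω => κ ω)) Set.univ = ρ Set.univ := bind_mass κ ρ
  have hρfix : ρ.bind (fun ω => κ ω) = ρ := eq_of_le_of_mass_eq hbindle hmass (measure_ne_top ρ _)
  set c := ρ Set.univ with hcdef
  have hc1 : c ≤ 1 := by
    rw [hcdef]
    calc ρ Set.univ ≤ ν Set.univ := hρν Set.univ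
      _ = 1 := measure_univ
  rcases eq_or_lt_of_le hc1 with hceq | hclt
  · have h1 : ρ = ν := eq_of_le_of_mass_eq hρν (by rw [← hcdef, hceq, measure_univ]) (by simp)
    have h2 : ρ = ν' := eq_of_le_of_mass_eq hρν' (by rw [← hcdef, hceq, measure_univ]) (by simp)
    rw [← h2, h1]
  · exfalso
    set d := 1 - c with hddef
    have hd0 : d ≠ 0 := by
      rw [hddef]
      simpa [tsub_eq_zero_iff_le] using not_le.2 hclt
    have hdT : d ≠ ⊤ := by
      rw [hddef]
      exact (tsub_le_self.trans_lt ENNReal.one_lt_top).ne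
    have hcT : c ≠ ⊤ := (hc1.trans_lt ENNReal.one_lt_top).ne
    set ρ1 := ν.withDensity (fun ω => 1 - g ω) with hρ1def
    set ρ2 := ν.withDensity (fun ω => f ω - g ω) with hρ2def
    have hsum1 : ρ + ρ1 = ν := by
      rw [hρdef, hρ1def, ← withDensity_add_left hgm,
        show (g + fun ω => 1 - g ω) = fun _ => (1 : ℝ≥0∞) from
          funext fun ω => add_tsub_cancel_of_le (min_le_right _ _)]
      exact withDensity_one
    have hsum2 : ρ + ρ2 = ν' := by
      rw [hρdef, hρ2def, ← withDensity_add_left hgm,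
        show (g + fun ω => f ω - g ω) = f from
          funext fun ω => add_tsub_cancel_of_le (min_le_left _ _)]
      exact hν'eq
    have hstat1 : ρ1.bind (fun ω => κ ω) = ρ1 := by
      refine add_left_cancel_meas (ρ := ρ) ?_
      calc ρ + ρ1.bind (fun ω => κ ω)
          = ρ.bind (fun ω => κ ω) + ρ1.bind (fun ω => κ ω) := by rw [hρfix]
        _ = (ρ + ρ1).bind (fun ω => κ ω) := (bind_add κ ρ ρ1).symm
        _ = ν := by rw [hsum1, hstat]
        _ = ρ + ρ1 := hsum1.symm
    have hmass1 : ρ1 Set.univ = d := by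
      have h := congrArg (fun m : Measure Ω => m Set.univ) hsum1
      simp only [Measure.add_apply, measure_univ] at h
      rw [← hcdef, add_comm] at h
      exact ENNReal.eq_sub_of_add_eq hcT h
    have hmass2 : ρ2 Set.univ = d := by
      have h := congrArg (fun m : Measure Ω => m Set.univ) hsum2
      simp only [Measure.add_apply, measure_univ] at h
      rw [← hcdef, add_comm] at h
      exact ENNReal.eq_sub_of_add_eq hcT h
    haveI hprob1 : IsProbabilityMeasure ((d⁻¹ : ℝ≥0∞) • ρ1) :=
      ⟨by rw [Measure.smul_apply, hmass1, smul_eq_mul, ENNReal.inv_mul_cancel hd0 hdT]⟩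
    have hstatσ : ((d⁻¹ : ℝ≥0∞) • ρ1).bind (fun ω => κ ω) = (d⁻¹ : ℝ≥0∞) • ρ1 := by
      rw [bind_smul, hstat1]
    set S := {ω | 1 ≤ f ω} with hSdef
    have hSm : MeasurableSet S := measurableSet_le measurable_const hfm
    have hz1 : ∀ ω ∈ S, (1 : ℝ≥0∞) - g ω = (fun _ : Ω => (0 : ℝ≥0∞)) ω := by
      intro ω hω
      have hgω : g ω = 1 := min_eq_right (hω : (1:ℝ≥0∞) ≤ f ω)
      simp [hgω]
    have hρ1S : ρ1 S = 0 := by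
      rw [hρ1def, withDensity_apply _ hSm,
        setLIntegral_congr_fun hSm hz1, lintegral_zero]
    have hz2 : ∀ ω ∈ Sᶜ, f ω - g ω = (fun _ : Ω => (0 : ℝ≥0∞)) ω := by
      intro ω hω
      have hle : f ω ≤ 1 := le_of_lt (not_le.1 (hω : ¬ (1:ℝ≥0∞) ≤ f ω))
      have hgω : g ω = f ω := min_eq_left hle
      simp [hgω]
    have hρ2Sc : ρ2 Sᶜ = 0 := by
      rw [hρ2def, withDensity_apply _ hSm.compl,
        setLIntegral_congr_fun hSm.compl hz2,
        lintegral_zero]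
    have hρ2S : ρ2 S = d := by
      have h := measure_add_measure_compl (μ := ρ2) hSm
      rw [hρ2Sc, add_zero, hmass2] at h
      exact h
    rcases eq_or_ne (ν S) 0 with hνS | hνS
    · have h0 : ρ2 S = 0 := by
        rw [hρ2def]
        exact (withDensity_absolutelyContinuous ν _) hνS
      rw [hρ2S] at h0
      exact hd0 h0
    · have hνSpos : 0 < ν S := zero_lt_iff.2 hνS
      have hpos := pos_of_stationary κ ν hirr ((d⁻¹ : ℝ≥0∞) • ρ1) hstatσ hSm hνSpos
      rw [Measure.smul_apply, hρ1S, smul_zero] at hpos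
      exact lt_irrefl 0 hpos
end

section
/- Let Ω be a measurable space, μ a probability measure on Ω, and ℓ : Ω → ℝ≥0∞ measurable with ℓ ω ≠ 0 and ℓ ω ≠ ∞ for every ω. Consider the independence proposal kernel k ω = μ for all ω (this is the kernel mutateTree with p = 1, which resamples the entire state) with Green ratio r (ω, ω') = ℓ ω' / ℓ ω, and its Metropolis–Hastings–Green kernel κMHG ω = μ.withDensity (fun ω' => min 1 (ℓ ω' / ℓ ω)) + (1 - ∫⁻ ω', min 1 (ℓ ω' / ℓ ω) ∂μ) • Measure.dirac ω. Then κMHG is irreducible in one step with respect to the unnormalized posterior: for every ω ∈ Ω and every measurable set U with (μ.withDensity ℓ) U > 0, one has (κMHG ω) U > 0. -/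
open MeasureTheory ENNReal

/-- Proposition 5.3 of the paper: for the independence proposal kernel `k ω = μ`
(the kernel `mutateTree` with `p = 1`, resampling the entire state) with Green ratio
`r (ω, ω') = ℓ ω' / ℓ ω`, the induced Metropolis–Hastings–Green kernel is irreducible in
one step with respect to the unnormalized posterior `μ.withDensity ℓ`. -/
theorem mhg_independence_kernel_irreducible
    {Ω : Type*} [MeasurableSpace Ω]
    (μ : Measure Ω) [IsProbabilityMeasure μ]
    (ℓ : Ω → ℝ≥0∞) (hℓ : Measurable ℓ)
    (hℓ0 : ∀ ω, ℓ ω ≠ 0) (hℓtop : ∀ ω, ℓ ω ≠ ∞)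
    (κMHG : Ω → Measure Ω)
    (hκ : κMHG = fun ω =>
      μ.withDensity (fun ω' => min 1 (ℓ ω' / ℓ ω))
        + (1 - ∫⁻ ω', min 1 (ℓ ω' / ℓ ω) ∂μ) • Measure.dirac ω) :
    ∀ ω : Ω, ∀ U : Set Ω, MeasurableSet U → (μ.withDensity ℓ) U > 0 →
      (κMHG ω) U > 0 := by
  intro ω U hU hpos
  -- μ U > 0
  have hμU : μ U > 0 := by
    by_contra h
    push_neg at h
    have hμU0 : μ U = 0 := le_antisymm h zero_le
    rw [withDensity_apply _ hU] at hpos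
    rw [setLIntegral_measure_zero U ℓ hμU0] at hpos
    exact lt_irrefl 0 hpos
  have hf : Measurable (fun ω' => min 1 (ℓ ω' / ℓ ω)) :=
    measurable_const.min (hℓ.div measurable_const)
  have hfpos : ∀ x, min 1 (ℓ x / ℓ ω) ≠ 0 := by
    intro x
    simp only [ne_eq, min_eq_iff, not_or]
    constructor
    · rintro ⟨h1, -⟩; exact one_ne_zero h1
    · rintro ⟨h1, -⟩
      exact (ENNReal.div_ne_zero.mpr ⟨hℓ0 x, hℓtop ω⟩) h1
  have hint : 0 < ∫⁻ x in U, min 1 (ℓ x / ℓ ω) ∂μ := by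
    by_contra h
    push_neg at h
    have h0 : ∫⁻ x in U, min 1 (ℓ x / ℓ ω) ∂μ = 0 := le_antisymm h zero_le
    rw [lintegral_eq_zero_iff hf] at h0
    have : μ U = 0 := by
      have := h0
      rw [Filter.EventuallyEq, ae_restrict_iff' hU] at this
      have hsub : U ⊆ {x | ¬ (x ∈ U → min 1 (ℓ x / ℓ ω) = (0 : Ω → ℝ≥0∞) x)} ∪ ∅ := by
        intro x hx
        left
        intro hcontra
        exact hfpos x (hcontra hx)
      refine le_antisymm ?_ zero_le
      calc μ U ≤ μ ({x | ¬ (x ∈ U → min 1 (ℓ x / ℓ ω) = (0 : Ω → ℝ≥0∞) x)} ∪ ∅) :=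
            measure_mono hsub
        _ = 0 := by
            rw [Set.union_empty]
            exact this
    exact absurd this hμU.ne'
  rw [hκ]
  refine lt_of_lt_of_le hint ?_
  simp only [Measure.coe_add, Pi.add_apply]
  rw [withDensity_apply _ hU]
  exact le_self_add
end

section
/- Let Ω be a measurable space, let κ and κ' be Markov kernels on Ω, let ν be a probability measure on Ω, and let r : ℝ≥0∞ with 0 < r and r < 1. Define the mixture kernel κmix ω = r • κ ω + (1 - r) • κ' ω. If κ is irreducible with respect to ν, then κmix is irreducible with respect to ν. -/
open MeasureTheory ProbabilityTheory ENNReal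

/-- A kernel (family of measures) `κ : Ω → Measure Ω` is irreducible with respect to a
measure `ν` if from every state, every set of positive `ν`-measure is reached with
positive probability in some finite number of steps. -/
def KernelIrreducible {Ω : Type*} [MeasurableSpace Ω]
    (κ : Ω → Measure Ω) (ν : Measure Ω) : Prop :=
  ∀ ω : Ω, ∀ U : Set Ω, MeasurableSet U → ν U > 0 →
    ∃ n ≥ 1, ((fun m : Measure Ω => m.bind κ)^[n] (Measure.dirac ω)) U > 0

/-- Proposition 6.2 of the paper: mixing an irreducible Markov kernel `κ` with any other
Markov kernel `κ'` with weights `r` and `1 - r`, `0 < r < 1`, again yields an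
irreducible kernel. -/
theorem mixture_irreducible
    {Ω : Type*} [MeasurableSpace Ω]
    (κ κ' : Kernel Ω Ω) [IsMarkovKernel κ] [IsMarkovKernel κ']
    (ν : Measure Ω) [IsProbabilityMeasure ν]
    (r : ℝ≥0∞) (hr0 : 0 < r) (hr1 : r < 1)
    (κmix : Ω → Measure Ω)
    (hmix : κmix = fun ω => r • κ ω + (1 - r) • κ' ω)
    (hirr : KernelIrreducible (fun ω => κ ω) ν) :
    KernelIrreducible κmix ν := by
  subst hmix
  intro ω U hU hνU
  obtain ⟨n, hn1, hn⟩ := hirr ω U hU hνU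
  refine ⟨n, hn1, ?_⟩
  have hκm : Measurable fun ω => r • κ ω + (1 - r) • κ' ω := by
    apply Measure.measurable_of_measurable_coe
    intro s hs
    simp only [Measure.add_apply, Measure.smul_apply, smul_eq_mul]
    exact ((κ.measurable_coe hs).const_mul r).add ((κ'.measurable_coe hs).const_mul (1 - r))
  have key : ∀ k : ℕ,
      r ^ k • ((fun m : Measure Ω => m.bind (fun ω => κ ω))^[k] (Measure.dirac ω))
        ≤ (fun m : Measure Ω => m.bind (fun ω => r • κ ω + (1 - r) • κ' ω))^[k]
            (Measure.dirac ω) := by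
    intro k
    induction k with
    | zero => simp
    | succ k ih =>
      rw [Function.iterate_succ_apply', Function.iterate_succ_apply']
      rw [Measure.le_iff] at ih ⊢
      intro s hs
      have h1 : ((fun m : Measure Ω => m.bind (fun ω => r • κ ω + (1 - r) • κ' ω))^[k]
          (Measure.dirac ω)).bind (fun ω => r • κ ω + (1 - r) • κ' ω) s
          = ∫⁻ a, (r • κ a + (1 - r) • κ' a) s
              ∂((fun m : Measure Ω => m.bind (fun ω => r • κ ω + (1 - r) • κ' ω))^[k]
                (Measure.dirac ω)) :=
        Measure.bind_apply hs hκm.aemeasurable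
    -- lower bound the integrand, then the measure
      have h2 : ∀ a : Ω, r * κ a s ≤ (r • κ a + (1 - r) • κ' a) s := by
        intro a
        simp only [Measure.add_apply, Measure.smul_apply, smul_eq_mul]
        exact le_add_of_nonneg_right zero_le
      have hmono : (r ^ k • ((fun m : Measure Ω => m.bind (fun ω => κ ω))^[k]
          (Measure.dirac ω)) : Measure Ω)
          ≤ (fun m : Measure Ω => m.bind (fun ω => r • κ ω + (1 - r) • κ' ω))^[k]
            (Measure.dirac ω) := Measure.le_iff.2 ih
      calc (r ^ (k + 1) • (((fun m : Measure Ω => m.bind (fun ω => κ ω))^[k]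
              (Measure.dirac ω)).bind (fun ω => κ ω))) s
          = r ^ (k + 1) * ∫⁻ a, κ a s
              ∂((fun m : Measure Ω => m.bind (fun ω => κ ω))^[k] (Measure.dirac ω)) := by
            rw [Measure.smul_apply, smul_eq_mul,
              Measure.bind_apply hs κ.measurable.aemeasurable]
        _ = ∫⁻ a, r * κ a s
              ∂(r ^ k • ((fun m : Measure Ω => m.bind (fun ω => κ ω))^[k]
                (Measure.dirac ω))) := by
            rw [lintegral_smul_measure, lintegral_const_mul _ (κ.measurable_coe hs)]
            ring
        _ ≤ ∫⁻ a, r * κ a s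
              ∂((fun m : Measure Ω => m.bind (fun ω => r • κ ω + (1 - r) • κ' ω))^[k]
                (Measure.dirac ω)) :=
            lintegral_mono' hmono le_rfl
        _ ≤ ∫⁻ a, (r • κ a + (1 - r) • κ' a) s
              ∂((fun m : Measure Ω => m.bind (fun ω => r • κ ω + (1 - r) • κ' ω))^[k]
                (Measure.dirac ω)) := lintegral_mono fun a => h2 a
        _ = _ := h1.symm
  have hle := Measure.le_iff.1 (key n) U hU
  rw [Measure.smul_apply, smul_eq_mul] at hle
  have hrn : r ^ n ≠ 0 := pow_ne_zero _ hr0.ne'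
  calc (0 : ℝ≥0∞) < r ^ n * ((fun m : Measure Ω => m.bind (fun ω => κ ω))^[n]
        (Measure.dirac ω)) U := ENNReal.mul_pos hrn hn.ne'
    _ ≤ _ := hle
end

section
/- Let (Ω', 𝒜, P) be a probability space and let X : ℕ → Ω' → ℝ be measurable functions that are independent (iIndepFun with respect to P) and identically distributed (each X k has the same law as X 0), with X k ω ∈ Set.Icc (0:ℝ) 1 for all k and ω, and P {ω | 0 < X 0 ω} > 0. Then for P-almost every ω, the stick-breaking weights v k = X k ω * ∏_{i ∈ Finset.range k} (1 - X i ω) sum to one: HasSum (fun k => X k ω * ∏ i ∈ Finset.range k, (1 - X i ω)) 1. In particular this holds for the stick-breaking construction of the Dirichlet process, where the X k are i.i.d. Beta(1, α) random variables. -/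
open MeasureTheory ProbabilityTheory Filter

/-- If infinitely often a factor is at most `1 - ε`, the partial products of numbers
in `[0,1]` tend to `0`. -/
lemma prod_tendsto_zero_of_frequently {Y : ℕ → ℝ} (h0 : ∀ k, 0 ≤ Y k) (h1 : ∀ k, Y k ≤ 1)
    {ε : ℝ} (hε : 0 < ε) (hε1 : ε ≤ 1) (hfreq : ∃ᶠ n in atTop, Y n ≤ 1 - ε) :
    Tendsto (fun n => ∏ i ∈ Finset.range n, Y i) atTop (nhds 0) := by
  set p : ℕ → ℝ := fun n => ∏ i ∈ Finset.range n, Y i with hp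
  have hpnonneg : ∀ n, 0 ≤ p n := fun n => Finset.prod_nonneg fun i _ => h0 i
  have hple1 : ∀ n, p n ≤ 1 := fun n => Finset.prod_le_one (fun i _ => h0 i) (fun i _ => h1 i)
  have hanti : Antitone p := by
    apply antitone_nat_of_succ_le
    intro n
    have : p (n + 1) = p n * Y n := Finset.prod_range_succ Y n
    rw [this]
    calc p n * Y n ≤ p n * 1 := mul_le_mul_of_nonneg_left (h1 n) (hpnonneg n)
    _ = p n := mul_one _
  obtain ⟨φ, hφmono, hφ⟩ := extraction_of_frequently_atTop hfreq
  -- key inequality along the subsequence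
  have hsub : ∀ a b, a ≤ b → Y b ≤ 1 - ε → p (b + 1) ≤ p a * (1 - ε) := by
    intro a b hab hb
    have : p (b + 1) = p b * Y b := Finset.prod_range_succ Y b
    rw [this]
    exact mul_le_mul (hanti hab) hb (h0 b) (hpnonneg a)
  have key : ∀ m, p (φ m + 1) ≤ (1 - ε) ^ (m + 1) := by
    intro m
    induction m with
    | zero =>
      have := hsub 0 (φ 0) (Nat.zero_le _) (hφ 0)
      simpa [hp] using this
    | succ m ih =>
      have h1' : φ m + 1 ≤ φ (m + 1) := hφmono (Nat.lt_succ_self m)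
      have := hsub (φ m + 1) (φ (m + 1)) h1' (hφ (m + 1))
      calc p (φ (m + 1) + 1) ≤ p (φ m + 1) * (1 - ε) := this
      _ ≤ (1 - ε) ^ (m + 1) * (1 - ε) :=
          mul_le_mul_of_nonneg_right ih (by linarith)
      _ = (1 - ε) ^ (m + 1 + 1) := (pow_succ _ _).symm
  -- p converges to its infimum L
  have hbdd : BddBelow (Set.range p) := ⟨0, fun x ⟨n, hn⟩ => hn ▸ hpnonneg n⟩
  have hL : Tendsto p atTop (nhds (⨅ n, p n)) := tendsto_atTop_ciInf hanti hbdd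
  set L := ⨅ n, p n with hLdef
  have hL0 : 0 ≤ L := le_ciInf fun n => hpnonneg n
  -- subsequence tends to L, and is bounded by (1-ε)^(m+1) → 0
  have hg : Tendsto (fun m => φ m + 1) atTop atTop :=
    (tendsto_add_atTop_nat 1).comp hφmono.tendsto_atTop
  have hsubL : Tendsto (fun m => p (φ m + 1)) atTop (nhds L) := hL.comp hg
  have hpow : Tendsto (fun m => (1 - ε) ^ (m + 1)) atTop (nhds (0:ℝ)) := by
    have := tendsto_pow_atTop_nhds_zero_of_lt_one (by linarith : (0:ℝ) ≤ 1 - ε)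
      (by linarith : (1:ℝ) - ε < 1)
    exact this.comp (tendsto_add_atTop_nat 1)
  have hLle : L ≤ 0 := le_of_tendsto_of_tendsto' hsubL hpow key
  have : L = 0 := le_antisymm hLle hL0
  rwa [this] at hL

/-- Stick-breaking sums to one (Section 3.3.1 of the paper): for i.i.d. proportions
`X k ∈ [0,1]` with `P(X 0 > 0) > 0`, almost surely the stick lengths
`v k = X k * ∏_{i<k} (1 - X i)` have sum `1`. In particular this applies to the
stick-breaking construction of the Dirichlet process with `X k ∼ Beta(1, α)`. -/
theorem stickBreaking_hasSum_one
    {Ω' : Type*} [MeasurableSpace Ω'] (P : Measure Ω') [IsProbabilityMeasure P]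
    (X : ℕ → Ω' → ℝ) (hmeas : ∀ k, Measurable (X k))
    (hindep : iIndepFun X P)
    (hident : ∀ k, IdentDistrib (X k) (X 0) P P)
    (hrange : ∀ k ω, X k ω ∈ Set.Icc (0:ℝ) 1)
    (hpos : P {ω | 0 < X 0 ω} > 0) :
    ∀ᵐ ω ∂P, HasSum (fun k => X k ω * ∏ i ∈ Finset.range k, (1 - X i ω)) 1 := by
  -- Step 1: find ε > 0 with P (X 0 ≥ ε) > 0
  have hexists : ∃ n : ℕ, P (X 0 ⁻¹' Set.Ici ((n:ℝ) + 1)⁻¹) ≠ 0 := by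
    by_contra h
    push_neg at h
    have hsub : {ω | 0 < X 0 ω} ⊆ ⋃ n : ℕ, X 0 ⁻¹' Set.Ici ((n:ℝ) + 1)⁻¹ := by
      intro ω hω
      simp only [Set.mem_setOf_eq] at hω
      obtain ⟨n, hn⟩ := exists_nat_one_div_lt hω
      exact Set.mem_iUnion.2 ⟨n, by
        simp only [Set.mem_preimage, Set.mem_Ici]
        rw [one_div] at hn
        exact hn.le⟩
    have : P {ω | 0 < X 0 ω} ≤ P (⋃ n : ℕ, X 0 ⁻¹' Set.Ici ((n:ℝ) + 1)⁻¹) :=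
      measure_mono hsub
    rw [measure_iUnion_null h] at this
    exact absurd (le_antisymm this zero_le) (ne_of_gt hpos)
  obtain ⟨n, hn⟩ := hexists
  set ε : ℝ := ((n:ℝ) + 1)⁻¹ with hεdef
  have hε : 0 < ε := by positivity
  have hε1 : ε ≤ 1 := by
    rw [hεdef]
    rw [inv_le_one_iff₀]
    right
    linarith [Nat.cast_nonneg (α := ℝ) n]
  -- Step 2: the events s k = {X k ≥ ε} are independent
  set s : ℕ → Set Ω' := fun k => X k ⁻¹' Set.Ici ε with hsdef
  have hsm : ∀ k, MeasurableSet (s k) := fun k => (hmeas k) measurableSet_Ici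
  have hsindep : iIndepSet s P := by
    rw [iIndepSet_iff_meas_biInter hsm]
    intro F
    exact hindep.measure_inter_preimage_eq_mul F
      (sets := fun _ => Set.Ici ε) (fun i _ => measurableSet_Ici)
  -- Step 3: the sum of probabilities diverges
  have hmeaseq : ∀ k, P (s k) = P (s 0) := fun k =>
    (hident k).measure_mem_eq measurableSet_Ici
  have htsum : ∑' k, P (s k) = ⊤ := by
    have : ∀ k, P (s k) = P (s 0) := hmeaseq
    rw [tsum_congr this]
    exact ENNReal.tsum_const_eq_top_of_ne_zero hn
  -- Step 4: second Borel-Cantelli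
  have hlimsup : P (limsup s atTop) = 1 := measure_limsup_eq_one hsm hsindep htsum
  have hae : ∀ᵐ ω ∂P, ω ∈ limsup s atTop := by
    rw [ae_iff]
    have h1 : P (limsup s atTop)ᶜ = 1 - P (limsup s atTop) := by
      rw [measure_compl (MeasurableSet.measurableSet_limsup fun k => hsm k) (measure_ne_top _ _)]
      simp
    have : {a | ¬ a ∈ limsup s atTop} = (limsup s atTop)ᶜ := rfl
    rw [this, h1, hlimsup]
    simp
  -- Step 5: conclude pointwise
  filter_upwards [hae] with ω hω
  have hfreq : ∃ᶠ k in atTop, (1 : ℝ) - X k ω ≤ 1 - ε := by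
    have := Filter.mem_limsup_iff_frequently_mem.1 hω
    exact this.mono fun k hk => by
      simp only [hsdef, Set.mem_preimage, Set.mem_Ici] at hk
      linarith
  have hY0 : ∀ k, (0:ℝ) ≤ 1 - X k ω := fun k => by linarith [(hrange k ω).2]
  have hY1 : ∀ k, (1:ℝ) - X k ω ≤ 1 := fun k => by linarith [(hrange k ω).1]
  have hprod : Tendsto (fun m => ∏ i ∈ Finset.range m, (1 - X i ω)) atTop (nhds 0) :=
    prod_tendsto_zero_of_frequently hY0 hY1 hε hε1 hfreq
  -- partial sums telescope
  have hpartial : ∀ m, ∑ k ∈ Finset.range m, X k ω * ∏ i ∈ Finset.range k, (1 - X i ω)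
      = 1 - ∏ i ∈ Finset.range m, (1 - X i ω) := by
    intro m
    induction m with
    | zero => simp
    | succ m ih =>
      rw [Finset.sum_range_succ, ih, Finset.prod_range_succ]
      ring
  have hnonneg : ∀ k, 0 ≤ X k ω * ∏ i ∈ Finset.range k, (1 - X i ω) := fun k =>
    mul_nonneg (hrange k ω).1 (Finset.prod_nonneg fun i _ => hY0 i)
  rw [hasSum_iff_tendsto_nat_of_nonneg hnonneg]
  simp only [hpartial]
  have : Tendsto (fun m => 1 - ∏ i ∈ Finset.range m, (1 - X i ω)) atTop (nhds (1 - 0)) :=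
    Tendsto.const_sub 1 hprod
  simpa using this
end

section
/- Let Ω, X, Y, Z, W be measurable spaces, μ a probability measure on Ω, and γ : Ω → Ω × Ω a measurable map with Measure.map γ μ = μ.prod μ. For measurable f : X × Ω → Y and g : Y × Ω → Z, define their Kleisli composite g ⊚ f : X × Ω → Z by (g ⊚ f) (x, ω) = g (f (x, (γ ω).1), (γ ω).2). Then composition of probability kernels is associative up to distributional equivalence: for all measurable f : X × Ω → Y, g : Y × Ω → Z, h : Z × Ω → W and every x : X, Measure.map (fun ω => (h ⊚ (g ⊚ f)) (x, ω)) μ = Measure.map (fun ω => ((h ⊚ g) ⊚ f) (x, ω)) μ. -/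
open MeasureTheory

/-- The Kleisli composite of two probability kernels `f : X × Ω → Y` and `g : Y × Ω → Z`
with respect to a seed-splitting map `γ : Ω → Ω × Ω`: run `f` on the first half of the
split seed and `g` on the second half. -/
def kleisliComp {Ω X Y Z : Type*} (γ : Ω → Ω × Ω)
    (g : Y × Ω → Z) (f : X × Ω → Y) : X × Ω → Z :=
  fun q => g (f (q.1, (γ q.2).1), (γ q.2).2)

/-- Associativity up to distributional equivalence of the composition of probability
kernels (the core of Proposition 5.5 of the paper), in the measurable-space fragment:
if `γ` is measure-preserving from `(Ω, μ)` to `(Ω × Ω, μ ⊗ μ)`, then for measurable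
kernels `f, g, h` and every input `x`, the two ways of associating their Kleisli
composite have the same law. -/
theorem kleisliComp_assoc_law
    {Ω X Y Z W : Type*} [MeasurableSpace Ω] [MeasurableSpace X] [MeasurableSpace Y]
    [MeasurableSpace Z] [MeasurableSpace W]
    (μ : Measure Ω) [IsProbabilityMeasure μ]
    (γ : Ω → Ω × Ω) (hγ : Measurable γ) (hγμ : Measure.map γ μ = μ.prod μ)
    (f : X × Ω → Y) (hf : Measurable f)
    (g : Y × Ω → Z) (hg : Measurable g)
    (h : Z × Ω → W) (hh : Measurable h)
    (x : X) :
    Measure.map (fun ω => kleisliComp γ h (kleisliComp γ g f) (x, ω)) μ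
      = Measure.map (fun ω => kleisliComp γ (kleisliComp γ h g) f (x, ω)) μ := by
  -- the common "fully associated" form
  set K : Ω × Ω × Ω → W := fun p => h (g (f (x, p.1), p.2.1), p.2.2) with hK
  have hKm : Measurable K := by
    apply hh.comp
    apply Measurable.prodMk _ (measurable_snd.comp measurable_snd)
    exact hg.comp (((hf.comp (measurable_const.prodMk measurable_fst)).prodMk
      (measurable_fst.comp measurable_snd)))
  have hid_gamma : Measurable (Prod.map (id : Ω → Ω) γ) :=
    measurable_id.prodMap hγ
  have hgamma_id : Measurable (Prod.map γ (id : Ω → Ω)) :=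
    hγ.prodMap measurable_id
  -- LHS
  have hL : Measure.map (fun ω => kleisliComp γ h (kleisliComp γ g f) (x, ω)) μ
      = Measure.map (((K ∘ MeasurableEquiv.prodAssoc) ∘ Prod.map γ id) ∘ γ) μ := by
    rfl
  have hR : Measure.map (fun ω => kleisliComp γ (kleisliComp γ h g) f (x, ω)) μ
      = Measure.map ((K ∘ Prod.map id γ) ∘ γ) μ := by
    rfl
  rw [hL, hR,
    ← Measure.map_map ((hKm.comp MeasurableEquiv.prodAssoc.measurable).comp hgamma_id) hγ,
    ← Measure.map_map (hKm.comp hid_gamma) hγ, hγμ,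
    ← Measure.map_map (hKm.comp MeasurableEquiv.prodAssoc.measurable) hgamma_id,
    ← Measure.map_map hKm hid_gamma,
    ← Measure.map_map hKm MeasurableEquiv.prodAssoc.measurable]
  have h1 : Measure.map (Prod.map γ (id : Ω → Ω)) (μ.prod μ) = (μ.prod μ).prod μ := by
    rw [← Measure.map_prod_map _ _ hγ measurable_id, hγμ, Measure.map_id]
  have h2 : Measure.map (Prod.map (id : Ω → Ω) γ) (μ.prod μ) = μ.prod (μ.prod μ) := by
    rw [← Measure.map_prod_map _ _ measurable_id hγ, hγμ, Measure.map_id]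
  rw [h1, h2, Measure.prodAssoc_prod]
end
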